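/- There exists a universal constant C > 0 such that for every finite metric space (X, d_X) with |X| = n ≥ 2 there is a finitely supported probability distribution D over metrics ρ on X such that: every ρ in the support is an ultrametric dominating d_X; every ρ in the support satisfies ρ(x,y) ≤ 32·n·d_X(x,y) for all x ≠ y; and for every x ∈ X and every u > 0, the probability under D that max_{y ≠ x} ρ(x,y)/d_X(x,y) ≥ u is at most C·(log n)/u. -/

import Mathlib

/-- `d` is a metric on `X`. -/
def IsMetric {X : Type*} (d : X → X → ℝ) : Prop :=
  (∀ x y, 0 ≤ d x y) ∧ (∀ x y, d x y = 0 ↔ x = y) ∧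
  (∀ x y, d x y = d y x) ∧ (∀ x y z, d x z ≤ d x y + d y z)

/-- `ρ` is an ultrametric. -/
def IsUltrametric {X : Type*} (ρ : X → X → ℝ) : Prop :=
  ∀ u v w, ρ u v ≤ max (ρ u w) (ρ w v)

open scoped Classical
open Finset

noncomputable section

set_option linter.unusedSectionVars false

lemma IsMetric.nonneg {X : Type*} {d : X → X → ℝ} (hd : IsMetric d) (x y : X) : 0 ≤ d x y := hd.1 x y
lemma IsMetric.self {X : Type*} {d : X → X → ℝ} (hd : IsMetric d) (x : X) : d x x = 0 := (hd.2.1 x x).2 rfl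
lemma IsMetric.symm {X : Type*} {d : X → X → ℝ} (hd : IsMetric d) (x y : X) : d x y = d y x := hd.2.2.1 x y
lemma IsMetric.tri {X : Type*} {d : X → X → ℝ} (hd : IsMetric d) (x y z : X) : d x z ≤ d x y + d y z :=
  hd.2.2.2 x y z
lemma IsMetric.pos {X : Type*} {d : X → X → ℝ} (hd : IsMetric d) {x y : X} (h : x ≠ y) : 0 < d x y := by
  rcases lt_or_eq_of_le (hd.1 x y) with h1 | h1
  · exact h1
  · exact absurd ((hd.2.1 x y).1 h1.symm) h

namespace MGTB

variable {X : Type} [Fintype X]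

/-- step relation: being within distance `s`, transitively closed. -/
def EE (d : X → X → ℝ) (s : ℝ) : X → X → Prop :=
  Relation.ReflTransGen (fun a b => d a b ≤ s)

lemma EE.rfl {d : X → X → ℝ} {s : ℝ} {a : X} : EE d s a a := Relation.ReflTransGen.refl

lemma EE.of_le {d : X → X → ℝ} {s : ℝ} {a b : X} (h : d a b ≤ s) : EE d s a b :=
  Relation.ReflTransGen.single h

lemma EE.trans' {d : X → X → ℝ} {s : ℝ} {a b c : X} (h1 : EE d s a b) (h2 : EE d s b c) :
    EE d s a c := Relation.ReflTransGen.trans h1 h2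

lemma EE.symm' {d : X → X → ℝ} (hd : IsMetric d) {s : ℝ} {a b : X} (h : EE d s a b) :
    EE d s b a := by
  induction h with
  | refl => exact EE.rfl
  | tail _ hstep ih => exact EE.trans' (EE.of_le (by rw [hd.symm]; exact hstep)) ih

lemma not_EE_gt {d : X → X → ℝ} {s : ℝ} {a b : X} (h : ¬ EE d s a b) : s < d a b := by
  by_contra hc
  exact h (EE.of_le (le_of_not_gt hc))

/-- the `EE`-class of `x` as a Finset. -/
def cls (d : X → X → ℝ) (s : ℝ) (x : X) : Finset X :=
  Finset.univ.filter (fun y => EE d s x y)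

lemma mem_cls {d : X → X → ℝ} {s : ℝ} {x y : X} : y ∈ cls d s x ↔ EE d s x y := by
  simp [cls]

lemma self_mem_cls {d : X → X → ℝ} {s : ℝ} {x : X} : x ∈ cls d s x := mem_cls.2 EE.rfl

lemma cls_eq_of_EE {d : X → X → ℝ} (hd : IsMetric d) {s : ℝ} {x y : X} (h : EE d s x y) :
    cls d s x = cls d s y := by
  ext z
  simp only [mem_cls]
  exact ⟨fun hz => (h.symm' hd).trans' hz, fun hz => h.trans' hz⟩

lemma cls_disjoint_of_not_EE {d : X → X → ℝ} (hd : IsMetric d) {s : ℝ} {x y : X}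
    (h : ¬ EE d s x y) : Disjoint (cls d s x) (cls d s y) := by
  rw [Finset.disjoint_left]
  intro z hz hz'
  exact h ((mem_cls.1 hz).trans' ((mem_cls.1 hz').symm' hd))

/-- distance within a class is at most `(card − 1) * s`. -/
lemma dist_le_of_EE {d : X → X → ℝ} (hd : IsMetric d) {s : ℝ} (hs : 0 ≤ s) {a b : X}
    (h : EE d s a b) : d a b ≤ (((cls d s a).card : ℝ) - 1) * s := by
  classical
  have hcard1 : (1 : ℝ) ≤ ((cls d s a).card : ℝ) := by
    have := Finset.card_pos.2 ⟨a, self_mem_cls (d := d) (s := s) (x := a)⟩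
    exact_mod_cast this
  by_cases hab : a = b
  · subst hab
    rw [hd.self]
    have : (0:ℝ) ≤ ((cls d s a).card : ℝ) - 1 := by linarith
    positivity
  -- build a graph
  set G : SimpleGraph X := SimpleGraph.mk (fun u v => u ≠ v ∧ d u v ≤ s)
    ⟨by intro u v huv; exact ⟨huv.1.symm, by rw [hd.symm v u]; exact huv.2⟩⟩
    ⟨by intro u hu; exact hu.1 rfl⟩ with hG
  -- reachability from EE
  have reach : ∀ {u v : X}, EE d s u v → G.Reachable u v := by
    intro u v huv
    induction huv with
    | refl => exact SimpleGraph.Reachable.refl _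
    | tail _ hstep ih =>
      rename_i p q _
      by_cases hpq : p = q
      · subst hpq; exact ih
      · exact ih.trans (SimpleGraph.Adj.reachable ⟨hpq, hstep⟩)
  -- walk → EE
  have walkEE : ∀ {u v : X} (p : G.Walk u v), EE d s u v := by
    intro u v p
    induction p with
    | nil => exact EE.rfl
    | cons hadj _ ih => exact (EE.of_le hadj.2).trans' ih
  have walkdist : ∀ {u v : X} (p : G.Walk u v), d u v ≤ (p.length : ℝ) * s := by
    intro u v p
    induction p with
    | nil => simp [hd.self]
    | cons hadj q ih =>
      rename_i a' b' c' 
      calc d a' c' ≤ d a' b' + d b' c' := hd.tri _ _ _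
        _ ≤ s + (q.length : ℝ) * s := add_le_add hadj.2 ih
        _ = ((q.length : ℝ) + 1) * s := by ring
        _ = (((SimpleGraph.Walk.cons hadj q).length : ℝ)) * s := by
            rw [SimpleGraph.Walk.length_cons]; push_cast; ring
  obtain ⟨p⟩ := reach h
  have hpath := p.bypass_isPath
  set q := p.bypass with hq
  have hsupp : ∀ z ∈ q.support, z ∈ cls d s a := by
    intro z hz
    exact mem_cls.2 (walkEE (q.takeUntil z hz))
  have hlen : q.length + 1 ≤ (cls d s a).card := by
    have hnodup := hpath.support_nodup
    have : q.support.toFinset ⊆ cls d s a := by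
      intro z hz; exact hsupp z (List.mem_toFinset.1 hz)
    have hc := Finset.card_le_card this
    rwa [List.toFinset_card_of_nodup hnodup, SimpleGraph.Walk.length_support] at hc
  have : d a b ≤ (q.length : ℝ) * s := walkdist q
  have hql : (q.length : ℝ) ≤ ((cls d s a).card : ℝ) - 1 := by
    have : (q.length : ℝ) + 1 ≤ ((cls d s a).card : ℝ) := by exact_mod_cast hlen
    linarith
  calc d a b ≤ (q.length : ℝ) * s := this
    _ ≤ (((cls d s a).card : ℝ) - 1) * s := mul_le_mul_of_nonneg_right hql hs

-- hop: contracted one-step cost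
variable {d : X → X → ℝ} {s : ℝ}

def hop (d : X → X → ℝ) (s : ℝ) (a b : X) : ℝ :=
  ((Finset.univ : Finset (X × X)).filter (fun p => EE d s a p.1 ∧ EE d s b p.2)).inf'
    ⟨(a, b), by simp only [Finset.mem_filter, Finset.mem_univ, true_and]; exact ⟨EE.rfl, EE.rfl⟩⟩
    (fun p => d p.1 p.2)

lemma hop_nonneg (hd : IsMetric d) (a b : X) : 0 ≤ hop d s a b :=
  Finset.le_inf' _ _ (fun p _ => hd.nonneg _ _)

lemma hop_le_pair {a b p q : X} (h1 : EE d s a p) (h2 : EE d s b q) : hop d s a b ≤ d p q := by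
  have hm : (p, q) ∈ (Finset.univ : Finset (X × X)).filter
      (fun r => EE d s a r.1 ∧ EE d s b r.2) := by
    simp only [Finset.mem_filter, Finset.mem_univ, true_and]
    exact ⟨h1, h2⟩
  exact Finset.inf'_le (fun r : X × X => d r.1 r.2) hm

lemma hop_le (a b : X) : hop d s a b ≤ d a b :=
  hop_le_pair EE.rfl EE.rfl

lemma hop_exists (a b : X) : ∃ p q, EE d s a p ∧ EE d s b q ∧ hop d s a b = d p q := by
  have hne : (((Finset.univ : Finset (X × X)).filter
      (fun r => EE d s a r.1 ∧ EE d s b r.2))).Nonempty := by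
    refine ⟨(a, b), ?_⟩
    simp only [Finset.mem_filter, Finset.mem_univ, true_and]
    exact ⟨EE.rfl, EE.rfl⟩
  obtain ⟨pq, hpq, heq⟩ := Finset.exists_mem_eq_inf' hne (fun r : X × X => d r.1 r.2)
  simp only [Finset.mem_filter, Finset.mem_univ, true_and] at hpq
  exact ⟨pq.1, pq.2, hpq.1, hpq.2, heq⟩

lemma hop_eq_zero_of_EE (hd : IsMetric d) {a b : X} (h : EE d s a b) : hop d s a b = 0 :=
  le_antisymm (by simpa [hd.self] using hop_le_pair (d := d) h (EE.rfl (a := b)))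
    (hop_nonneg hd a b)

lemma hop_self (hd : IsMetric d) (a : X) : hop d s a a = 0 := hop_eq_zero_of_EE hd EE.rfl

lemma hop_congr_left (hd : IsMetric d) {a a' : X} (h : EE d s a a') (b : X) :
    hop d s a b = hop d s a' b := by
  apply le_antisymm
  · apply Finset.le_inf'
    intro p hp
    simp only [Finset.mem_filter, Finset.mem_univ, true_and] at hp
    exact hop_le_pair (h.trans' hp.1) hp.2
  · apply Finset.le_inf'
    intro p hp
    simp only [Finset.mem_filter, Finset.mem_univ, true_and] at hp
    exact hop_le_pair ((h.symm' hd).trans' hp.1) hp.2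

lemma hop_congr_right (hd : IsMetric d) {b b' : X} (h : EE d s b b') (a : X) :
    hop d s a b = hop d s a b' := by
  apply le_antisymm
  · apply Finset.le_inf'
    intro p hp
    simp only [Finset.mem_filter, Finset.mem_univ, true_and] at hp
    exact hop_le_pair hp.1 (h.trans' hp.2)
  · apply Finset.le_inf'
    intro p hp
    simp only [Finset.mem_filter, Finset.mem_univ, true_and] at hp
    exact hop_le_pair hp.1 ((h.symm' hd).trans' hp.2)

/-- cost of a chain starting at `x` through the list `l`. -/
def lcost (d : X → X → ℝ) (s : ℝ) : X → List X → ℝ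
  | _, [] => 0
  | x, y :: l => hop d s x y + lcost d s y l

@[simp] lemma lcost_nil (x : X) : lcost d s x [] = 0 := rfl
@[simp] lemma lcost_cons (x y : X) (l : List X) :
    lcost d s x (y :: l) = hop d s x y + lcost d s y l := rfl

lemma lcost_nonneg (hd : IsMetric d) : ∀ (l : List X) (x : X), 0 ≤ lcost d s x l := by
  intro l
  induction l with
  | nil => intro x; simp
  | cons y l ih =>
    intro x
    simp only [lcost_cons]
    exact add_nonneg (hop_nonneg hd _ _) (ih y)

lemma lcost_congr_head (hd : IsMetric d) {x x' : X} (h : EE d s x x') (l : List X) :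
    lcost d s x l = lcost d s x' l := by
  cases l with
  | nil => rfl
  | cons y t => simp only [lcost_cons, hop_congr_left hd h y]

lemma lcost_drop_prefix (hd : IsMetric d) (b : X) (v : List X) :
    ∀ (u : List X) (x : X), lcost d s b v ≤ lcost d s x (u ++ b :: v) := by
  intro u
  induction u with
  | nil =>
    intro x
    simp only [List.nil_append, lcost_cons]
    have := hop_nonneg (s := s) hd x b
    linarith
  | cons c u' ih =>
    intro x
    simp only [List.cons_append, lcost_cons]
    have := hop_nonneg (s := s) hd x c
    have h2 := ih c
    linarith

lemma lcost_cut (hd : IsMetric d) {a b : X} (h : EE d s a b) (v w : List X) :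
    ∀ (u : List X) (x : X),
      lcost d s x (u ++ b :: w) ≤ lcost d s x (u ++ a :: (v ++ b :: w)) := by
  intro u
  induction u with
  | nil =>
    intro x
    simp only [List.nil_append, lcost_cons]
    have h1 : hop d s x b = hop d s x a := hop_congr_right hd (h.symm' hd) x
    have h2 : lcost d s b w ≤ lcost d s a (v ++ b :: w) := lcost_drop_prefix hd b w v a
    linarith
  | cons c u' ih =>
    intro x
    simp only [List.cons_append, lcost_cons]
    have := ih c
    linarith

lemma lcost_self_chain (hd : IsMetric d) (y : X) :
    ∀ k, lcost d s y (List.replicate k y ++ [y]) = 0 := by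
  intro k
  induction k with
  | zero => simp [hop_self hd]
  | succ k ih => simpa [List.replicate_succ, hop_self hd] using ih

lemma lcost_append_pad (hd : IsMetric d) (y : X) (k : ℕ) :
    ∀ (l : List X) (x : X),
      lcost d s x (l ++ List.replicate k y ++ [y]) = lcost d s x (l ++ [y]) := by
  intro l
  induction l with
  | nil =>
    intro x
    cases k with
    | zero => simp
    | succ k =>
      simp only [List.nil_append, List.replicate_succ, List.cons_append, lcost_cons]
      rw [lcost_self_chain hd y k]
      simp
  | cons a l' ih =>
    intro x
    simp only [List.cons_append, lcost_cons, ih a]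

/-- decompose a two-element sublist. -/
lemma pair_sublist_decomp : ∀ {L : List X} {a b : X}, [a, b].Sublist L →
    ∃ u v w, L = u ++ a :: (v ++ b :: w) := by
  intro L
  induction L with
  | nil => intro a b h; exact absurd h (by simp)
  | cons c L ih =>
    intro a b h
    cases h with
    | cons _ h' =>
      obtain ⟨u, v, w, rfl⟩ := ih h'
      exact ⟨c :: u, v, w, rfl⟩
    | cons_cons _ h' =>
      have hb : b ∈ L := List.singleton_sublist.1 h'
      obtain ⟨v, w, rfl⟩ := List.append_of_mem hb
      exact ⟨[], v, w, rfl⟩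

lemma append_last_decomp {p q r : List X} {y : X} (h : p ++ [y] = q ++ r) (hr : r ≠ []) :
    ∃ r', r = r' ++ [y] ∧ p = q ++ r' := by
  have hd1 : r.dropLast ++ [r.getLast hr] = r := List.dropLast_append_getLast hr
  have h2 : p ++ [y] = (q ++ r.dropLast) ++ [r.getLast hr] := by
    rw [List.append_assoc, hd1]; exact h
  have h3 := List.append_inj' h2 rfl
  refine ⟨r.dropLast, ?_, h3.1⟩
  have : y = r.getLast hr := by simpa using h3.2
  rw [this]
  exact hd1.symm

/-- chain compression: any chain from `x` to `y` can be replaced by one whose members have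
pairwise distinct classes, with no larger cost. -/
lemma compress (hd : IsMetric d) {x y : X} (hxy : ¬ EE d s x y) :
    ∀ (l : List X), ∃ l' : List X,
      lcost d s x (l' ++ [y]) ≤ lcost d s x (l ++ [y]) ∧
      List.Pairwise (fun a b => ¬ EE d s a b) (x :: (l' ++ [y])) := by
  suffices H : ∀ (m : ℕ) (l : List X), l.length ≤ m → ∃ l' : List X,
      lcost d s x (l' ++ [y]) ≤ lcost d s x (l ++ [y]) ∧
      List.Pairwise (fun a b => ¬ EE d s a b) (x :: (l' ++ [y])) by
    intro l; exact H l.length l le_rfl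
  intro m
  induction m with
  | zero =>
    intro l hl
    rw [List.length_eq_zero_iff.1 (Nat.le_zero.1 hl)]
    refine ⟨[], le_rfl, ?_⟩
    simp only [List.nil_append]
    exact List.pairwise_pair.2 hxy
  | succ m ih =>
    intro l hl
    by_cases hP : List.Pairwise (fun a b => ¬ EE d s a b) (x :: (l ++ [y]))
    · exact ⟨l, le_rfl, hP⟩
    · -- find an offending pair
      have hexists : ∃ a b, [a, b].Sublist (x :: (l ++ [y])) ∧ EE d s a b := by
        by_contra hc
        push_neg at hc
        exact hP (List.pairwise_iff_forall_sublist.2 (fun {a b} hsub => hc a b hsub))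
      obtain ⟨a, b, hsub, hE⟩ := hexists
      obtain ⟨u, v, w, hdec⟩ := pair_sublist_decomp hsub
      cases u with
      | nil =>
        -- a = x
        simp only [List.nil_append] at hdec
        have hxa : x = a := (List.cons_eq_cons.1 hdec).1
        have htl : l ++ [y] = v ++ b :: w := (List.cons_eq_cons.1 hdec).2
        subst hxa
        have htl2 : l ++ [y] = (v ++ [b]) ++ w := by
          rw [htl, List.append_cons]
        by_cases hw : w = []
        · -- b = y, so EE x y, contradiction
          subst hw
          rw [List.append_nil] at htl2
          have hinj := List.append_inj' htl2 rfl
          have hby : y = b := by simpa using hinj.2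
          exact absurd (hby ▸ hE) hxy
        · obtain ⟨w', hw', hlv⟩ := append_last_decomp htl2 hw
          -- w = w' ++ [y], l = (v ++ [b]) ++ w'
          have hl2 : l ++ [y] = v ++ b :: (w' ++ [y]) := by
            rw [hlv]; simp
          cases v with
          | nil =>
            -- l ++ [y] = b :: (w' ++ [y]) ; EE x b ; use chain w'
            have hcost : lcost d s x (w' ++ [y]) ≤ lcost d s x (l ++ [y]) := by
              rw [hl2]
              simp only [List.nil_append, lcost_cons]
              rw [lcost_congr_head hd (hE.symm' hd) (w' ++ [y])]
              have := hop_nonneg (s := s) hd x b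
              linarith
            have hlen : w'.length ≤ m := by
              have h5 := congrArg List.length hl2
              simp at h5
              omega
            obtain ⟨l', h1, h2⟩ := ih w' hlen
            exact ⟨l', le_trans h1 hcost, h2⟩
          | cons v0 v1 =>
            -- use chain b :: w'
            have hcost : lcost d s x ((b :: w') ++ [y]) ≤ lcost d s x (l ++ [y]) := by
              rw [hl2]
              simp only [List.cons_append, lcost_cons]
              rw [hop_eq_zero_of_EE hd hE]
              have hdp : lcost d s b (w' ++ [y]) ≤
                  lcost d s v0 (v1 ++ b :: (w' ++ [y])) := lcost_drop_prefix hd _ _ _ _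
              have := hop_nonneg (s := s) hd x v0
              linarith
            have hlen : (b :: w').length ≤ m := by
              have h5 := congrArg List.length hl2
              simp at h5
              simp only [List.length_cons]
              omega
            obtain ⟨l', h1, h2⟩ := ih (b :: w') hlen
            exact ⟨l', le_trans h1 hcost, h2⟩
      | cons c u' =>
        have hxc : x = c := (List.cons_eq_cons.1 hdec).1
        have htl : l ++ [y] = u' ++ a :: (v ++ b :: w) := (List.cons_eq_cons.1 hdec).2
        subst hxc
        have htl2 : l ++ [y] = ((u' ++ a :: v) ++ [b]) ++ w := by
          rw [htl]; simp
        by_cases hw : w = []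
        · -- b = y
          subst hw
          rw [List.append_nil] at htl2
          have hinj := List.append_inj' htl2 rfl
          have hby : y = b := by simpa using hinj.2
          subst hby
          have hcost : lcost d s x (u' ++ [y]) ≤ lcost d s x (l ++ [y]) := by
            rw [htl]
            have := lcost_cut hd hE v [] u' x
            simpa using this
          have hlen : u'.length ≤ m := by
            have h5 := congrArg List.length htl
            simp at h5
            omega
          obtain ⟨l', h1, h2⟩ := ih u' hlen
          exact ⟨l', le_trans h1 hcost, h2⟩
        · obtain ⟨w'', hw'', hlu⟩ := append_last_decomp htl2 hw
          -- w = w'' ++ [y], l = ((u' ++ a :: v) ++ [b]) ++ w''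
          have hl2 : l ++ [y] = u' ++ a :: (v ++ b :: (w'' ++ [y])) := by
            rw [hlu]; simp
          have hcost : lcost d s x ((u' ++ b :: w'') ++ [y]) ≤ lcost d s x (l ++ [y]) := by
            rw [hl2]
            have := lcost_cut hd hE v (w'' ++ [y]) u' x
            simpa [List.append_assoc] using this
          have hlen : (u' ++ b :: w'').length ≤ m := by
            have h5 := congrArg List.length hl2
            simp at h5
            simp only [List.length_append, List.length_cons]
            omega
          obtain ⟨l', h1, h2⟩ := ih (u' ++ b :: w'') hlen
          exact ⟨l', le_trans h1 hcost, h2⟩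

/-- sum of `(|cls z| - 1) * s` over a list. -/
def listS (d : X → X → ℝ) (s : ℝ) (L : List X) : ℝ :=
  (L.map (fun z => (((cls d s z).card : ℝ) - 1) * s)).sum

@[simp] lemma listS_nil : listS d s [] = 0 := rfl
@[simp] lemma listS_cons (z : X) (L : List X) :
    listS d s (z :: L) = (((cls d s z).card : ℝ) - 1) * s + listS d s L := rfl

lemma listS_nonneg (hs : 0 ≤ s) (L : List X) : 0 ≤ listS d s L := by
  induction L with
  | nil => simp
  | cons z L ih =>
    simp only [listS_cons]
    have h1 : (1 : ℝ) ≤ ((cls d s z).card : ℝ) := by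
      exact_mod_cast Finset.card_pos.2 ⟨z, self_mem_cls⟩
    nlinarith

lemma cls_card_sum_le (hd : IsMetric d) :
    ∀ (L : List X), List.Pairwise (fun a b => ¬ EE d s a b) L →
    ∀ (A : Finset X), (∀ z ∈ L, Disjoint (cls d s z) A) →
      (L.map (fun z => (cls d s z).card)).sum + A.card ≤ Fintype.card X := by
  intro L
  induction L with
  | nil =>
    intro _ A _
    simpa using Finset.card_le_univ A
  | cons z L ih =>
    intro hP A hA
    have hzA : Disjoint (cls d s z) A := hA z (by simp)
    have h1 : ∀ w ∈ L, Disjoint (cls d s w) (A ∪ cls d s z) := by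
      intro w hw
      refine Finset.disjoint_union_right.2 ⟨hA w (by simp [hw]), ?_⟩
      exact (cls_disjoint_of_not_EE hd ((List.pairwise_cons.1 hP).1 w hw)).symm
    have h2 := ih (List.pairwise_cons.1 hP).2 (A ∪ cls d s z) h1
    have h3 : (A ∪ cls d s z).card = A.card + (cls d s z).card := by
      rw [Finset.card_union_of_disjoint hzA.symm]
    simp only [List.map_cons, List.sum_cons]
    omega

lemma listS_le (hd : IsMetric d) (hs : 0 ≤ s) (L : List X)
    (hP : List.Pairwise (fun a b => ¬ EE d s a b) L) :
    listS d s L ≤ ((Fintype.card X : ℝ) - L.length) * s := by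
  have h1 := cls_card_sum_le hd L hP ∅ (by simp)
  simp only [Finset.card_empty, add_zero] at h1
  have h2 : ∀ (L' : List X),
      listS d s L' = (((L'.map (fun z => (cls d s z).card)).sum : ℝ) - L'.length) * s := by
    intro L'
    induction L' with
    | nil => simp
    | cons z L' ih =>
      simp only [listS_cons, ih, List.map_cons, List.sum_cons, List.length_cons]
      push_cast
      ring
  rw [h2 L]
  apply mul_le_mul_of_nonneg_right _ hs
  have : ((L.map (fun z => (cls d s z).card)).sum : ℝ) ≤ (Fintype.card X : ℝ) := by
    exact_mod_cast h1
  linarith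

/-- chains with pairwise-distinct classes give an upper bound on the true distance. -/
lemma direct_bound (hd : IsMetric d) (hs : 0 ≤ s) :
    ∀ (l : List X) (x : X), List.Pairwise (fun a b => ¬ EE d s a b) (x :: l) →
      d x ((x :: l).getLast (List.cons_ne_nil _ _)) ≤ lcost d s x l + listS d s (x :: l) := by
  intro l
  induction l with
  | nil =>
    intro x _
    simp only [List.getLast_singleton, lcost_nil, listS_cons, listS_nil, hd.self]
    have h1 : (1 : ℝ) ≤ ((cls d s x).card : ℝ) := by
      exact_mod_cast Finset.card_pos.2 ⟨x, self_mem_cls⟩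
    nlinarith
  | cons z t ih =>
    intro x hP
    obtain ⟨p, q, hxp, hzq, hhop⟩ := hop_exists (d := d) (s := s) x z
    have hdxp : d x p ≤ (((cls d s x).card : ℝ) - 1) * s := dist_le_of_EE hd hs hxp
    have hclsq : cls d s q = cls d s z := (cls_eq_of_EE hd hzq).symm
    have hgetlast : (x :: z :: t).getLast (List.cons_ne_nil _ _) =
        (z :: t).getLast (List.cons_ne_nil _ _) := List.getLast_cons _
    cases t with
    | nil =>
      -- target z
      have hqz : d q z ≤ (((cls d s z).card : ℝ) - 1) * s := by
        have := dist_le_of_EE hd hs (hzq.symm' hd)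
        rwa [hclsq] at this
      have htri : d x z ≤ d x p + d p q + d q z := by
        have t1 := hd.tri x p z
        have t2 := hd.tri p q z
        linarith
      simp only [hgetlast, List.getLast_singleton, lcost_cons, lcost_nil, listS_cons, listS_nil]
      rw [hhop]
      linarith
    | cons t0 t1 =>
      have htne : (t0 :: t1) ≠ [] := List.cons_ne_nil _ _
      -- pairwise for q :: t0 :: t1
      have hPzt : List.Pairwise (fun a b => ¬ EE d s a b) (z :: t0 :: t1) :=
        (List.pairwise_cons.1 hP).2
      have hPqt : List.Pairwise (fun a b => ¬ EE d s a b) (q :: t0 :: t1) := by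
        refine List.pairwise_cons.2 ⟨?_, (List.pairwise_cons.1 hPzt).2⟩
        intro b hb hqb
        exact (List.pairwise_cons.1 hPzt).1 b hb (hzq.trans' hqb)
      have hIH := ih q hPqt
      have hgl2 : (q :: t0 :: t1).getLast (List.cons_ne_nil _ _) =
          (z :: t0 :: t1).getLast (List.cons_ne_nil _ _) := by
        rw [List.getLast_cons htne, List.getLast_cons htne]
      have hlc : lcost d s q (t0 :: t1) = lcost d s z (t0 :: t1) :=
        lcost_congr_head hd (hzq.symm' hd) _
      have hlS : listS d s (q :: t0 :: t1) = listS d s (z :: t0 :: t1) := by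
        simp only [listS_cons, hclsq]
      rw [hgl2, hlc, hlS] at hIH
      simp only [lcost_cons, listS_cons] at hIH
      -- triangle
      set L := (z :: t0 :: t1).getLast (List.cons_ne_nil _ _) with hL
      have htri : d x L ≤ d x p + d p q + d q L := by
        have t1' := hd.tri x p L
        have t2' := hd.tri p q L
        linarith
      simp only [hgetlast, lcost_cons, listS_cons]
      rw [hhop]
      linarith

/-- the quotient pseudo-distance: min cost over chains of a fixed length. -/
def qd (d : X → X → ℝ) (s : ℝ) (x y : X) : ℝ :=
  (Finset.univ : Finset (Fin (Fintype.card X) → X)).inf'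
    ⟨fun _ => y, Finset.mem_univ _⟩ (fun g => lcost d s x (List.ofFn g ++ [y]))

lemma qd_nonneg (hd : IsMetric d) (x y : X) : 0 ≤ qd d s x y :=
  Finset.le_inf' _ _ (fun g _ => lcost_nonneg hd _ _)

lemma qd_le_chain' (hd : IsMetric d) (x y : X) (l : List X)
    (hl : l.length ≤ Fintype.card X) :
    qd d s x y ≤ lcost d s x (l ++ [y]) := by
  have hpad := lcost_append_pad (s := s) hd y (Fintype.card X - l.length) l x
  have hlen : (l ++ List.replicate (Fintype.card X - l.length) y).length = Fintype.card X := by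
    simp only [List.length_append, List.length_replicate]
    omega
  set L := l ++ List.replicate (Fintype.card X - l.length) y with hLdef
  have hex : ∃ g : Fin (Fintype.card X) → X, List.ofFn g = L := by
    refine ⟨fun i => L.get (Fin.cast hlen.symm i), ?_⟩
    apply List.ext_get
    · simp [hlen]
    · intro n h1 h2
      simp [List.get_ofFn]
  obtain ⟨g, hg⟩ := hex
  have h3 : qd d s x y ≤ lcost d s x (List.ofFn g ++ [y]) :=
    Finset.inf'_le _ (Finset.mem_univ g)
  rw [hg] at h3
  rw [hLdef, List.append_assoc] at h3
  rw [← List.append_assoc] at h3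
  rw [hpad] at h3
  exact h3

lemma qd_le_hop (hd : IsMetric d) (x y : X) : qd d s x y ≤ hop d s x y := by
  have h := qd_le_chain' (d := d) (s := s) hd x y [] (by simp)
  simpa using h

lemma qd_le_d (hd : IsMetric d) (x y : X) : qd d s x y ≤ d x y :=
  le_trans (qd_le_hop hd x y) (hop_le x y)

lemma qd_self (hd : IsMetric d) (x : X) : qd d s x x = 0 :=
  le_antisymm (by simpa [hop_self hd] using qd_le_hop (s := s) hd x x) (qd_nonneg hd x x)

lemma qd_congr_left (hd : IsMetric d) {x x' : X} (h : EE d s x x') (w : X) :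
    qd d s x w = qd d s x' w := by
  unfold qd
  have hfun : (fun g : Fin (Fintype.card X) → X => lcost d s x (List.ofFn g ++ [w])) =
      (fun g => lcost d s x' (List.ofFn g ++ [w])) := by
    funext g
    exact lcost_congr_head hd h _
  congr 1

lemma qd_exists (x y : X) : ∃ g : Fin (Fintype.card X) → X,
    qd d s x y = lcost d s x (List.ofFn g ++ [y]) := by
  obtain ⟨g, _, hg⟩ := Finset.exists_mem_eq_inf'
    (⟨fun _ => y, Finset.mem_univ _⟩ :
      (Finset.univ : Finset (Fin (Fintype.card X) → X)).Nonempty)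
    (fun g => lcost d s x (List.ofFn g ++ [y]))
  exact ⟨g, hg⟩

/-- (P4): the true distance exceeds `qd` by at most `(n-1)s`. -/
lemma d_le_qd (hd : IsMetric d) (hs : 0 ≤ s) (x y : X) :
    d x y ≤ qd d s x y + ((Fintype.card X : ℝ) - 1) * s := by
  have hcard1 : (1 : ℝ) ≤ ((cls d s x).card : ℝ) := by
    exact_mod_cast Finset.card_pos.2 ⟨x, self_mem_cls⟩
  have hcardn : ((cls d s x).card : ℝ) ≤ (Fintype.card X : ℝ) := by
    exact_mod_cast Finset.card_le_univ (cls d s x)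
  by_cases hE : EE d s x y
  · have h1 := dist_le_of_EE hd hs hE
    have h2 := qd_nonneg (s := s) hd x y
    nlinarith
  · obtain ⟨g, hg⟩ := qd_exists (d := d) (s := s) x y
    obtain ⟨l', hc, hPW⟩ := compress hd hE (List.ofFn g)
    have hdir := direct_bound hd hs (l' ++ [y]) x hPW
    have hgl : ((x :: (l' ++ [y])).getLast (List.cons_ne_nil _ _)) = y := by
      rw [List.getLast_cons (by simp : l' ++ [y] ≠ [])]
      simp [List.getLast_append]
    rw [hgl] at hdir
    have hlen : (x :: (l' ++ [y])).length = l'.length + 2 := by simp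
    have hlS : listS d s (x :: (l' ++ [y])) ≤
        ((Fintype.card X : ℝ) - (l'.length + 2)) * s := by
      have h7 := listS_le hd hs _ hPW
      rw [hlen] at h7
      push_cast at h7
      push_cast
      exact h7
    have hfin : listS d s (x :: (l' ++ [y])) ≤ ((Fintype.card X : ℝ) - 1) * s := by
      apply le_trans hlS
      apply mul_le_mul_of_nonneg_right _ hs
      have : (0:ℝ) ≤ l'.length := by positivity
      linarith
    rw [hg]
    linarith

/-- (P1): prepend inequality. -/
lemma qd_prepend (hd : IsMetric d) (hs : 0 ≤ s) (x y w : X) :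
    qd d s y w ≤ d y x + qd d s x w := by
  by_cases hE : EE d s x w
  · have h1 : qd d s y w ≤ hop d s y w := qd_le_hop hd y w
    have h2 : hop d s y w ≤ d y x := hop_le_pair EE.rfl (hE.symm' hd)
    have h3 := qd_nonneg (s := s) hd x w
    linarith
  · obtain ⟨g, hg⟩ := qd_exists (d := d) (s := s) x w
    obtain ⟨l', hc, hPW⟩ := compress hd hE (List.ofFn g)
    have hnodup : (x :: (l' ++ [w])).Nodup := by
      refine List.Pairwise.imp ?_ hPW
      intro a b hab
      intro hEq
      exact hab (hEq ▸ EE.rfl)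
    have hlen : (x :: (l' ++ [w])).length ≤ Fintype.card X := hnodup.length_le_card
    have hlen2 : (x :: l').length ≤ Fintype.card X := by
      simp only [List.length_cons] at hlen ⊢
      simp only [List.length_append, List.length_singleton] at hlen
      omega
    have h4 : qd d s y w ≤ lcost d s y ((x :: l') ++ [w]) := qd_le_chain' hd y w _ hlen2
    have h5 : lcost d s y ((x :: l') ++ [w]) = hop d s y x + lcost d s x (l' ++ [w]) := by
      simp
    have h6 : hop d s y x ≤ d y x := hop_le y x
    rw [hg]
    linarith

/-! ### random permutation argmin -/

def keyf (π : Equiv.Perm X) (t : X) : Fin (Fintype.card X) := (Fintype.equivFin X) (π t)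

lemma keyf_injective (π : Equiv.Perm X) : Function.Injective (keyf π) := by
  intro a b h
  exact π.injective ((Fintype.equivFin X).injective h)

def pmin (π : Equiv.Perm X) (T : Finset X) (hT : T.Nonempty) : X :=
  π.symm ((Fintype.equivFin X).symm ((T.image (keyf π)).min' (hT.image _)))

lemma keyf_pmin (π : Equiv.Perm X) (T : Finset X) (hT : T.Nonempty) :
    keyf π (pmin π T hT) = (T.image (keyf π)).min' (hT.image _) := by
  simp [pmin, keyf]

lemma pmin_mem (π : Equiv.Perm X) (T : Finset X) (hT : T.Nonempty) : pmin π T hT ∈ T := by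
  have h1 := Finset.min'_mem (T.image (keyf π)) (hT.image _)
  rw [Finset.mem_image] at h1
  obtain ⟨t, ht, hkey⟩ := h1
  have : pmin π T hT = t := by
    apply keyf_injective π
    rw [keyf_pmin, ← hkey]
  rwa [this]

lemma keyf_pmin_le (π : Equiv.Perm X) (T : Finset X) (hT : T.Nonempty) {t : X} (ht : t ∈ T) :
    keyf π (pmin π T hT) ≤ keyf π t := by
  rw [keyf_pmin]
  exact Finset.min'_le _ _ (Finset.mem_image_of_mem _ ht)

lemma pmin_eq_of_subset (π : Equiv.Perm X) {T S : Finset X} (hT : T.Nonempty) (hS : S.Nonempty)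
    {w : X} (hw : w ∈ T) (hsub : T ⊆ S) (h : pmin π S hS = w) : pmin π T hT = w := by
  apply keyf_injective π
  apply le_antisymm
  · exact keyf_pmin_le π T hT hw
  · rw [← h]
    exact keyf_pmin_le π S hS (hsub (pmin_mem π T hT))

lemma min'_congr' {β : Type*} [LinearOrder β] {s t : Finset β} (h : s = t) (hs : s.Nonempty) :
    s.min' hs = t.min' (h ▸ hs) := by subst h; rfl

lemma swap_image {T : Finset X} {v w : X} (hv : v ∈ T) (hw : w ∈ T) :
    T.image (Equiv.swap v w) = T := by
  ext a
  simp only [Finset.mem_image]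
  constructor
  · rintro ⟨b, hb, rfl⟩
    rcases eq_or_ne b v with rfl | hbv
    · simpa [Equiv.swap_apply_left] using hw
    rcases eq_or_ne b w with rfl | hbw
    · simpa [Equiv.swap_apply_right] using hv
    · rwa [Equiv.swap_apply_of_ne_of_ne hbv hbw]
  · intro ha
    refine ⟨Equiv.swap v w a, ?_, by simp⟩
    rcases eq_or_ne a v with rfl | hav
    · simpa [Equiv.swap_apply_left] using hw
    rcases eq_or_ne a w with rfl | haw
    · simpa [Equiv.swap_apply_right] using hv
    · rwa [Equiv.swap_apply_of_ne_of_ne hav haw]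

lemma pmin_mul_swap (π : Equiv.Perm X) (T : Finset X) (hT : T.Nonempty) {v w : X}
    (hv : v ∈ T) (hw : w ∈ T) :
    pmin (π * Equiv.swap v w) T hT = Equiv.swap v w (pmin π T hT) := by
  have hkey : ∀ t, keyf (π * Equiv.swap v w) t = keyf π (Equiv.swap v w t) := by
    intro t; simp [keyf]
  have himg : T.image (keyf (π * Equiv.swap v w)) = T.image (keyf π) := by
    have h1 : T.image (keyf (π * Equiv.swap v w)) =
        (T.image (Equiv.swap v w)).image (keyf π) := by
      rw [Finset.image_image]
      apply Finset.image_congr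
      intro t _
      exact hkey t
    rw [h1, swap_image hv hw]
  apply keyf_injective (π * Equiv.swap v w)
  rw [keyf_pmin]
  rw [hkey]
  rw [Equiv.swap_apply_self]
  rw [keyf_pmin]
  exact min'_congr' himg _

lemma pmin_fiber_card_eq (T : Finset X) (hT : T.Nonempty) {v w : X} (hv : v ∈ T) (hw : w ∈ T) :
    (Finset.univ.filter (fun π : Equiv.Perm X => pmin π T hT = v)).card =
    (Finset.univ.filter (fun π : Equiv.Perm X => pmin π T hT = w)).card := by
  apply Finset.card_bij' (fun π _ => π * Equiv.swap v w) (fun π _ => π * Equiv.swap v w)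
  · intro π hπ
    simp only [Finset.mem_filter, Finset.mem_univ, true_and] at hπ ⊢
    rw [pmin_mul_swap π T hT hv hw, hπ, Equiv.swap_apply_left]
  · intro π hπ
    simp only [Finset.mem_filter, Finset.mem_univ, true_and] at hπ ⊢
    rw [pmin_mul_swap π T hT hv hw, hπ, Equiv.swap_apply_right]
  · intro π _
    rw [mul_assoc, Equiv.swap_mul_self, mul_one]
  · intro π _
    rw [mul_assoc, Equiv.swap_mul_self, mul_one]

lemma pmin_count (T : Finset X) (hT : T.Nonempty) {w : X} (hw : w ∈ T) :
    (Finset.univ.filter (fun π : Equiv.Perm X => pmin π T hT = w)).card * T.card =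
      (Finset.univ : Finset (Equiv.Perm X)).card := by
  have h1 : (Finset.univ : Finset (Equiv.Perm X)).card =
      ∑ v ∈ T, (Finset.univ.filter (fun π : Equiv.Perm X => pmin π T hT = v)).card :=
    Finset.card_eq_sum_card_fiberwise (fun π _ => pmin_mem π T hT)
  have h2 : ∀ v ∈ T, (Finset.univ.filter (fun π : Equiv.Perm X => pmin π T hT = v)).card =
      (Finset.univ.filter (fun π : Equiv.Perm X => pmin π T hT = w)).card := by
    intro v hv
    exact pmin_fiber_card_eq T hT hv hw
  rw [h1, Finset.sum_congr rfl h2, Finset.sum_const, smul_eq_mul, mul_comm]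

/-! ### counting grid points in an interval -/

lemma grid_count {N : ℕ} (c h t α : ℝ) (hh : 0 < h) (ht : 0 ≤ t) :
    (((Finset.univ : Finset (Fin N)).filter
        (fun j : Fin N => α - t ≤ c + (j.val : ℝ) * h ∧ c + (j.val : ℝ) * h ≤ α + t)).card : ℝ) ≤
      2 * t / h + 1 := by
  set S := (Finset.univ : Finset (Fin N)).filter
      (fun j : Fin N => α - t ≤ c + (j.val : ℝ) * h ∧ c + (j.val : ℝ) * h ≤ α + t) with hS
  rcases S.eq_empty_or_nonempty with he | hne
  · rw [he]
    simp only [Finset.card_empty, Nat.cast_zero]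
    positivity
  · set j0 := S.min' hne with hj0
    have hj0S : j0 ∈ S := S.min'_mem hne
    have hbound : ∀ j : Fin N, j ∈ S → j.val ≤ j0.val + ⌊2 * t / h⌋₊ := by
      intro j hj
      have hjS := hj
      rw [hS, Finset.mem_filter] at hjS hj0S
      have hle : j0 ≤ j := S.min'_le j hj
      have hle' : (j0.val : ℝ) ≤ (j.val : ℝ) := by exact_mod_cast hle
      have hdiff : ((j.val : ℝ) - (j0.val : ℝ)) * h ≤ 2 * t := by
        have h1 := hjS.2.2
        have h2 := hj0S.2.1
        nlinarith
      have hdiff2 : ((j.val - j0.val : ℕ) : ℝ) ≤ 2 * t / h := by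
        rw [Nat.cast_sub (by exact_mod_cast hle)]
        rw [le_div_iff₀ hh]
        exact hdiff
      have := Nat.le_floor hdiff2
      omega
    have hsub : S.image (fun j : Fin N => j.val) ⊆
        Finset.Icc j0.val (j0.val + ⌊2 * t / h⌋₊) := by
      intro a ha
      rw [Finset.mem_image] at ha
      obtain ⟨j, hj, rfl⟩ := ha
      rw [Finset.mem_Icc]
      exact ⟨by exact_mod_cast S.min'_le j hj, hbound j hj⟩
    have hcard : S.card ≤ ⌊2 * t / h⌋₊ + 1 := by
      have h1 : S.card = (S.image (fun j : Fin N => j.val)).card := by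
        rw [Finset.card_image_of_injective _ Fin.val_injective]
      rw [h1]
      calc (S.image (fun j : Fin N => j.val)).card
          ≤ (Finset.Icc j0.val (j0.val + ⌊2 * t / h⌋₊)).card := Finset.card_le_card hsub
        _ = ⌊2 * t / h⌋₊ + 1 := by rw [Nat.card_Icc]; omega
    calc (S.card : ℝ) ≤ (⌊2 * t / h⌋₊ : ℝ) + 1 := by exact_mod_cast hcard
      _ ≤ 2 * t / h + 1 := by
          have : (⌊2 * t / h⌋₊ : ℝ) ≤ 2 * t / h := Nat.floor_le (by positivity)
          linarith

/-! ### harmonic sums -/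

lemma harmonic_step (m : ℕ) (hm : 1 ≤ m) :
    ((m : ℝ) + 1)⁻¹ ≤ Real.log ((m : ℝ) + 1) - Real.log m := by
  have hm0 : (0 : ℝ) < m := by exact_mod_cast hm
  have hm1 : (0 : ℝ) < (m : ℝ) + 1 := by linarith
  have h1 : Real.log ((m : ℝ) / ((m : ℝ) + 1)) ≤ (m : ℝ) / ((m : ℝ) + 1) - 1 :=
    Real.log_le_sub_one_of_pos (by positivity)
  rw [Real.log_div (ne_of_gt hm0) (ne_of_gt hm1)] at h1
  have h2 : (m : ℝ) / ((m : ℝ) + 1) - 1 = -(((m : ℝ) + 1)⁻¹) := by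
    field_simp
    ring
  rw [h2] at h1
  linarith

lemma harmonic_sum_bound (A : Finset X) (hA : A.Nonempty) (F : X → ℝ) (T : X → Finset X) :
    ∀ (W : Finset X), Disjoint A W →
      (∀ w ∈ W, A ⊆ T w) → (∀ w ∈ W, ∀ v ∈ W, F v ≤ F w → v ∈ T w) →
      (∑ w ∈ W, ((T w).card : ℝ)⁻¹) ≤
        Real.log ((A.card : ℝ) + W.card) - Real.log (A.card : ℝ) := by
  suffices H : ∀ (n : ℕ) (W : Finset X), W.card = n → Disjoint A W →
      (∀ w ∈ W, A ⊆ T w) → (∀ w ∈ W, ∀ v ∈ W, F v ≤ F w → v ∈ T w) →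
      (∑ w ∈ W, ((T w).card : ℝ)⁻¹) ≤
        Real.log ((A.card : ℝ) + W.card) - Real.log (A.card : ℝ) by
    intro W; exact H W.card W rfl
  intro n
  induction n with
  | zero =>
    intro W hWc _ _ _
    rw [Finset.card_eq_zero.1 hWc]
    simp
  | succ n ih =>
    intro W hWc hdisj hAT hWT
    have hWne : W.Nonempty := by
      rw [← Finset.card_pos, hWc]; omega
    obtain ⟨w0, hw0, hmax⟩ := Finset.exists_max_image W F hWne
    -- T w0 contains A ∪ W
    have hsub : A ∪ W ⊆ T w0 := by
      intro z hz
      rw [Finset.mem_union] at hz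
      rcases hz with hz | hz
      · exact hAT w0 hw0 hz
      · exact hWT w0 hw0 z hz (hmax z hz)
    have hcard : A.card + W.card ≤ (T w0).card := by
      have h1 : (A ∪ W).card = A.card + W.card := Finset.card_union_of_disjoint hdisj
      rw [← h1]
      exact Finset.card_le_card hsub
    have hApos : 1 ≤ A.card := Finset.card_pos.2 hA
    -- erase w0
    set W' := W.erase w0 with hW'
    have hW'c : W'.card = n := by
      rw [hW', Finset.card_erase_of_mem hw0, hWc]
      omega
    have hdisj' : Disjoint A W' := hdisj.mono_right (Finset.erase_subset _ _)
    have hAT' : ∀ w ∈ W', A ⊆ T w := fun w hw => hAT w (Finset.mem_of_mem_erase hw)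
    have hWT' : ∀ w ∈ W', ∀ v ∈ W', F v ≤ F w → v ∈ T w := fun w hw v hv h =>
      hWT w (Finset.mem_of_mem_erase hw) v (Finset.mem_of_mem_erase hv) h
    have hih := ih W' hW'c hdisj' hAT' hWT'
    have hsum : (∑ w ∈ W, ((T w).card : ℝ)⁻¹) =
        (∑ w ∈ W', ((T w).card : ℝ)⁻¹) + ((T w0).card : ℝ)⁻¹ := by
      rw [hW']
      exact (Finset.sum_erase_add W _ hw0).symm
    have hTpos : 0 < (T w0).card := by omega
    have hinv : ((T w0).card : ℝ)⁻¹ ≤ ((A.card : ℝ) + W.card)⁻¹ := by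
      apply inv_anti₀
      · have : (0:ℝ) < (A.card : ℝ) := by exact_mod_cast hApos
        have : (0:ℝ) ≤ (W.card : ℝ) := by positivity
        linarith [show (0:ℝ) < (A.card : ℝ) from by exact_mod_cast hApos]
      · exact_mod_cast hcard
    have hstep := harmonic_step (A.card + n) (by omega)
    have hcast1 : ((A.card + n : ℕ) : ℝ) = (A.card : ℝ) + n := by push_cast; ring
    have hcast2 : (A.card : ℝ) + W.card = ((A.card : ℝ) + n) + 1 := by
      rw [hWc]; push_cast; ring
    have hcast3 : (A.card : ℝ) + W'.card = (A.card : ℝ) + n := by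
      rw [hW'c]
    rw [hcast3] at hih
    rw [hsum, hcast2]
    rw [hcast1] at hstep
    have hx : ((T w0).card : ℝ)⁻¹ ≤ (((A.card : ℝ) + n) + 1)⁻¹ := by
      rw [← hcast2]; exact hinv
    linarith

/-! ### abstract cluster assignment at one scale -/

/-- cluster center of `z` for permutation `π`, scale parameter `sk`, radius `r`. -/
def ck (d : X → X → ℝ) (sk r : ℝ) (π : Equiv.Perm X) (z : X) : X :=
  pmin π (insert z (Finset.univ.filter (fun w => qd d sk z w ≤ r)))
    ⟨z, Finset.mem_insert_self _ _⟩

lemma insert_elig (hd : IsMetric d) {sk r : ℝ} (hr : 0 ≤ r) (z : X) :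
    insert z (Finset.univ.filter (fun w => qd d sk z w ≤ r)) =
      Finset.univ.filter (fun w => qd d sk z w ≤ r) := by
  apply Finset.insert_eq_self.2
  simp only [Finset.mem_filter, Finset.mem_univ, true_and]
  rw [qd_self hd]
  exact hr

lemma ck_congr (hd : IsMetric d) {sk r : ℝ} (hr : 0 ≤ r) {z z' : X} (h : EE d sk z z')
    (π : Equiv.Perm X) : ck d sk r π z = ck d sk r π z' := by
  unfold ck
  have h1 : insert z (Finset.univ.filter (fun w => qd d sk z w ≤ r)) =
      insert z' (Finset.univ.filter (fun w => qd d sk z' w ≤ r)) := by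
    rw [insert_elig hd hr z, insert_elig hd hr z']
    apply Finset.filter_congr
    intro w _
    simp only [qd_congr_left hd h w]
  -- transport pmin along equal finsets
  have : ∀ (T S : Finset X) (hT : T.Nonempty) (hS : S.Nonempty), T = S →
      pmin π T hT = pmin π S hS := by
    intro T S hT hS hEq
    subst hEq
    rfl
  exact this _ _ _ _ h1

lemma ck_mem_ball (hd : IsMetric d) {sk r : ℝ} (hsk : 0 ≤ sk) (hr : 0 ≤ r)
    (π : Equiv.Perm X) (z : X) :
    d z (ck d sk r π z) ≤ r + ((Fintype.card X : ℝ) - 1) * sk := by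
  have hmem := pmin_mem π (insert z (Finset.univ.filter (fun w => qd d sk z w ≤ r)))
    ⟨z, Finset.mem_insert_self _ _⟩
  rw [Finset.mem_insert] at hmem
  have hq : qd d sk z (ck d sk r π z) ≤ r := by
    rcases hmem with h | h
    · rw [show ck d sk r π z = z from h, qd_self hd]; exact hr
    · exact (Finset.mem_filter.1 h).2
  have := d_le_qd hd hsk z (ck d sk r π z)
  linarith

lemma ck_diam (hd : IsMetric d) {sk r : ℝ} (hsk : 0 ≤ sk) (hr : 0 ≤ r)
    (π : Equiv.Perm X) {z z' : X} (h : ck d sk r π z = ck d sk r π z') :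
    d z z' ≤ 2 * r + 2 * ((Fintype.card X : ℝ) - 1) * sk := by
  have h1 := ck_mem_ball hd hsk hr π z
  have h2 := ck_mem_ball hd hsk hr π z'
  rw [h] at h1
  have h3 := hd.tri z (ck d sk r π z') z'
  rw [hd.symm (ck d sk r π z') z'] at h3
  linarith

lemma ck_top (hd : IsMetric d) {sk r : ℝ} (hbig : ∀ z w : X, d z w ≤ r)
    (π : Equiv.Perm X) (z z' : X) : ck d sk r π z = ck d sk r π z' := by
  have huniv : ∀ (a : X), insert a (Finset.univ.filter (fun w => qd d sk a w ≤ r)) =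
      Finset.univ := by
    intro a
    apply Finset.eq_univ_of_forall
    intro w
    rcases eq_or_ne w a with rfl | hw
    · exact Finset.mem_insert_self _ _
    · apply Finset.mem_insert_of_mem
      simp only [Finset.mem_filter, Finset.mem_univ, true_and]
      exact le_trans (qd_le_d hd a w) (hbig a w)
  unfold ck
  have : ∀ (T S : Finset X) (hT : T.Nonempty) (hS : S.Nonempty), T = S →
      pmin π T hT = pmin π S hS := by
    intro T S hT hS hEq; subst hEq; rfl
  calc ck d sk r π z = pmin π Finset.univ ⟨z, Finset.mem_univ z⟩ := by
        unfold ck; exact this _ _ _ _ (huniv z)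
    _ = pmin π Finset.univ ⟨z', Finset.mem_univ z'⟩ := rfl
    _ = ck d sk r π z' := by unfold ck; exact (this _ _ _ _ (huniv z')).symm

lemma ck_sep_far (hd : IsMetric d) {sk r : ℝ} (hr : 0 ≤ r) (π : Equiv.Perm X) {z z' : X}
    (h : ck d sk r π z ≠ ck d sk r π z') : sk < d z z' := by
  apply not_EE_gt
  intro hE
  exact h (ck_congr hd hr hE π)

/-- the padding lemma: if some point near `x` is separated from `x`, then the
minimum of the enlarged eligibility set lies near the boundary and is the argmin
of its own `T`-set. -/
lemma ck_padding (hd : IsMetric d) {sk r t : ℝ} (hsk : 0 ≤ sk) (hr : 0 ≤ r) (ht : 0 ≤ t)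
    (π : Equiv.Perm X) {x y : X} (hxy : d x y ≤ t)
    (hsep : ck d sk r π x ≠ ck d sk r π y) :
    ∃ w0 : X,
      r - t < qd d sk x w0 ∧ qd d sk x w0 ≤ r + t ∧
      pmin π (Finset.univ.filter (fun v => qd d sk x v ≤ qd d sk x w0))
        ⟨w0, by simp⟩ = w0 := by
  classical
  set S := Finset.univ.filter (fun w => qd d sk x w ≤ r + t) with hSdef
  have hxS : x ∈ S := by
    simp only [hSdef, Finset.mem_filter, Finset.mem_univ, true_and]
    rw [qd_self hd]; linarith
  have hSne : S.Nonempty := ⟨x, hxS⟩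
  set w0 := pmin π S hSne with hw0
  have hw0S : w0 ∈ S := pmin_mem π S hSne
  have hw0le : qd d sk x w0 ≤ r + t := by
    have := (Finset.mem_filter.1 hw0S).2
    simpa using this
  have hgt : r - t < qd d sk x w0 := by
    by_contra hc
    push_neg at hc
    -- then both clusters are w0
    have hcx : ck d sk r π x = w0 := by
      unfold ck
      apply pmin_eq_of_subset π _ hSne _ _ hw0
      · rw [insert_elig hd hr x]
        simp only [Finset.mem_filter, Finset.mem_univ, true_and]
        linarith
      · rw [insert_elig hd hr x]
        intro v hv
        simp only [Finset.mem_filter, Finset.mem_univ, true_and] at hv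
        simp only [hSdef, Finset.mem_filter, Finset.mem_univ, true_and]
        linarith
    have hcy : ck d sk r π y = w0 := by
      unfold ck
      apply pmin_eq_of_subset π _ hSne _ _ hw0
      · rw [insert_elig hd hr y]
        simp only [Finset.mem_filter, Finset.mem_univ, true_and]
        have hpre := qd_prepend hd hsk x y w0
        have : d y x ≤ t := by rw [hd.symm]; exact hxy
        linarith
      · rw [insert_elig hd hr y]
        intro v hv
        simp only [Finset.mem_filter, Finset.mem_univ, true_and] at hv
        simp only [hSdef, Finset.mem_filter, Finset.mem_univ, true_and]
        have hpre := qd_prepend hd hsk y x v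
        linarith
    exact hsep (hcx.trans hcy.symm)
  refine ⟨w0, hgt, hw0le, ?_⟩
  apply pmin_eq_of_subset π _ hSne _ _ hw0
  · simp [← hw0]
  · intro v hv
    simp only [Finset.mem_filter, Finset.mem_univ, true_and] at hv
    simp only [hSdef, Finset.mem_filter, Finset.mem_univ, true_and]
    linarith

/-! ### the multiscale construction -/

variable (dm : ℝ) (M N : ℕ)

def Δc (k : ℕ) : ℝ := dm * 8 ^ k

def skc (k : ℕ) : ℝ := 9 / 32 * Δc dm k / Fintype.card X

def rrc (k : ℕ) (j : Fin N) : ℝ := Δc dm k * (1 / 4) + (j.val : ℝ) * (Δc dm k / (32 * (N:ℝ)))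

def ckk (d : X → X → ℝ) (ω : Equiv.Perm X × Fin N) (k : ℕ) (z : X) : X :=
  ck d (skc (X := X) dm k) (rrc dm N k ω.2) ω.1 z

def sepSet (d : X → X → ℝ) (ω : Equiv.Perm X × Fin N) (x y : X) : Finset ℕ :=
  (Finset.range (M + 1)).filter (fun k => ckk dm N d ω k x ≠ ckk dm N d ω k y)

def Kv (d : X → X → ℝ) (ω : Equiv.Perm X × Fin N) (x y : X) : ℕ :=
  (sepSet dm M N d ω x y).sup (· + 1)

def ρc (d : X → X → ℝ) (ω : Equiv.Perm X × Fin N) (x y : X) : ℝ :=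
  if x = y then 0 else 9 / 8 * dm * 8 ^ (Kv dm M N d ω x y)

section ScaleFacts

variable {d : X → X → ℝ} {dm : ℝ}

lemma Δc_pos (hdm : 0 < dm) (k : ℕ) : 0 < Δc dm k := by
  unfold Δc; positivity

lemma Δc_mono (hdm : 0 < dm) {k k' : ℕ} (h : k ≤ k') : Δc dm k ≤ Δc dm k' := by
  unfold Δc
  have : (8:ℝ)^k ≤ 8^k' := pow_le_pow_right₀ (by norm_num) h
  nlinarith

lemma skc_nonneg (hdm : 0 < dm) (k : ℕ) : 0 ≤ skc (X := X) dm k := by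
  unfold skc
  have h1 := Δc_pos hdm k
  apply div_nonneg (by linarith)
  positivity

lemma card_pos_real (hn : 2 ≤ Fintype.card X) : (0:ℝ) < (Fintype.card X : ℝ) := by
  have : (0:ℕ) < Fintype.card X := by omega
  exact_mod_cast this

lemma nsk_le (hdm : 0 < dm) (hn : 2 ≤ Fintype.card X) (k : ℕ) :
    ((Fintype.card X : ℝ) - 1) * skc (X := X) dm k ≤ 9 / 32 * Δc dm k := by
  unfold skc
  have hc := card_pos_real (X := X) hn
  have hΔ := Δc_pos hdm k
  have key : ((Fintype.card X : ℝ) - 1) * (9 / 32 * Δc dm k / Fintype.card X) =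
      9 / 32 * Δc dm k * (((Fintype.card X : ℝ) - 1) / Fintype.card X) := by ring
  rw [key]
  have h1 : ((Fintype.card X : ℝ) - 1) / Fintype.card X ≤ 1 := by
    rw [div_le_one hc]; linarith
  nlinarith

lemma rrc_lb {N : ℕ} (hdm : 0 < dm) (k : ℕ) (j : Fin N) :
    Δc dm k * (1/4) ≤ rrc dm N k j := by
  unfold rrc
  have hΔ := Δc_pos hdm k
  have hN : (0:ℝ) < N := by
    have := j.2
    have : 0 < N := by omega
    exact_mod_cast this
  have : (0:ℝ) ≤ (j.val : ℝ) * (Δc dm k / (32 * N)) := by positivity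
  linarith

lemma rrc_ub {N : ℕ} (hdm : 0 < dm) (k : ℕ) (j : Fin N) :
    rrc dm N k j ≤ 9 / 32 * Δc dm k := by
  unfold rrc
  have hΔ := Δc_pos hdm k
  have hN : (0:ℝ) < N := by
    have := j.2
    have : 0 < N := by omega
    exact_mod_cast this
  have hj : (j.val : ℝ) ≤ (N : ℝ) - 1 := by
    have := j.2
    have : (j.val : ℝ) + 1 ≤ (N : ℝ) := by exact_mod_cast j.2
    linarith
  have h1 : (j.val : ℝ) * (Δc dm k / (32 * N)) ≤ ((N:ℝ) - 1) * (Δc dm k / (32 * N)) := by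
    apply mul_le_mul_of_nonneg_right hj
    positivity
  have h2 : ((N:ℝ) - 1) * (Δc dm k / (32 * N)) ≤ Δc dm k / 32 := by
    have e1 : ((N:ℝ) - 1) * (Δc dm k / (32 * N)) = Δc dm k / 32 - Δc dm k / (32 * N) := by
      field_simp
    have e2 : 0 < Δc dm k / (32 * N) := by positivity
    linarith
  linarith

lemma rrc_nonneg {N : ℕ} (hdm : 0 < dm) (k : ℕ) (j : Fin N) : 0 ≤ rrc dm N k j := by
  have := rrc_lb hdm k j
  have := Δc_pos hdm k
  linarith

end ScaleFacts

section RhoFacts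

variable {d : X → X → ℝ} {dm : ℝ} {M N : ℕ}
variable (hd : IsMetric d) (hdm : 0 < dm) (hn : 2 ≤ Fintype.card X)
variable (hbig : ∀ z w : X, d z w ≤ Δc dm M * (1/4))

lemma sep_symm (ω : Equiv.Perm X × Fin N) (x y : X) :
    sepSet dm M N d ω x y = sepSet dm M N d ω y x := by
  unfold sepSet
  apply Finset.filter_congr
  intro k _
  simp [ne_comm]

lemma Kv_symm (ω : Equiv.Perm X × Fin N) (x y : X) :
    Kv dm M N d ω x y = Kv dm M N d ω y x := by
  unfold Kv; rw [sep_symm]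

include hd hdm hbig in
lemma sep_top (ω : Equiv.Perm X × Fin N) (x y : X) :
    ckk dm N d ω M x = ckk dm N d ω M y := by
  unfold ckk
  apply ck_top hd
  intro z w
  exact le_trans (hbig z w) (rrc_lb hdm M ω.2)

include hd hdm hbig in
lemma Kv_le_M (ω : Equiv.Perm X × Fin N) (x y : X) : Kv dm M N d ω x y ≤ M := by
  apply Finset.sup_le
  intro k hk
  unfold sepSet at hk
  rw [Finset.mem_filter, Finset.mem_range] at hk
  have hkM : k ≠ M := by
    intro h
    exact hk.2 (h ▸ sep_top hd hdm hbig ω x y)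
  omega

include hd hdm hbig in
lemma not_sep_at_Kv (ω : Equiv.Perm X × Fin N) (x y : X) :
    ckk dm N d ω (Kv dm M N d ω x y) x = ckk dm N d ω (Kv dm M N d ω x y) y := by
  by_contra h
  have h1 : Kv dm M N d ω x y ∈ sepSet dm M N d ω x y := by
    unfold sepSet
    rw [Finset.mem_filter, Finset.mem_range]
    exact ⟨by have := Kv_le_M hd hdm hbig ω x y; omega, h⟩
  have h2 : Kv dm M N d ω x y + 1 ≤ Kv dm M N d ω x y :=
    Finset.le_sup (f := (· + 1)) h1
  omega

lemma Kv_ultra (ω : Equiv.Perm X × Fin N) (x y z : X) :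
    Kv dm M N d ω x y ≤ max (Kv dm M N d ω x z) (Kv dm M N d ω z y) := by
  apply Finset.sup_le
  intro k hk
  unfold sepSet at hk
  rw [Finset.mem_filter, Finset.mem_range] at hk
  by_cases h1 : ckk dm N d ω k x = ckk dm N d ω k z
  · have h2 : ckk dm N d ω k z ≠ ckk dm N d ω k y := by
      rw [← h1]; exact hk.2
    have : k ∈ sepSet dm M N d ω z y := by
      unfold sepSet
      rw [Finset.mem_filter, Finset.mem_range]
      exact ⟨hk.1, h2⟩
    exact le_max_of_le_right (Finset.le_sup (f := (· + 1)) this)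
  · have : k ∈ sepSet dm M N d ω x z := by
      unfold sepSet
      rw [Finset.mem_filter, Finset.mem_range]
      exact ⟨hk.1, h1⟩
    exact le_max_of_le_left (Finset.le_sup (f := (· + 1)) this)

include hdm in
lemma ρc_nonneg (ω : Equiv.Perm X × Fin N) (x y : X) : 0 ≤ ρc dm M N d ω x y := by
  unfold ρc
  split
  · exact le_rfl
  · positivity

include hdm in
lemma ρc_pos (ω : Equiv.Perm X × Fin N) {x y : X} (h : x ≠ y) : 0 < ρc dm M N d ω x y := by
  unfold ρc
  rw [if_neg h]
  positivity

lemma ρc_symm (ω : Equiv.Perm X × Fin N) (x y : X) :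
    ρc dm M N d ω x y = ρc dm M N d ω y x := by
  unfold ρc
  rw [Kv_symm]
  by_cases h : x = y
  · rw [if_pos h, if_pos h.symm]
  · rw [if_neg h, if_neg (Ne.symm h)]

include hdm in
lemma ρc_ultra (ω : Equiv.Perm X × Fin N) : IsUltrametric (ρc dm M N d ω) := by
  intro x y z
  -- ρ x y ≤ max (ρ x z) (ρ z y)
  by_cases hxy : x = y
  · subst hxy
    have h0 : ρc dm M N d ω x x = 0 := by unfold ρc; rw [if_pos rfl]
    rw [h0]
    exact le_max_of_le_left (ρc_nonneg hdm ω x z)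
  by_cases hxz : x = z
  · subst hxz
    exact le_max_of_le_right le_rfl
  by_cases hzy : z = y
  · subst hzy
    exact le_max_of_le_left le_rfl
  -- all distinct
  have hK := Kv_ultra (d := d) (dm := dm) (M := M) (N := N) ω x y z
  unfold ρc
  rw [if_neg hxy, if_neg hxz, if_neg hzy]
  rcases max_cases (Kv dm M N d ω x z) (Kv dm M N d ω z y) with ⟨hm, _⟩ | ⟨hm, _⟩
  · apply le_max_of_le_left
    have h8 : (8:ℝ) ^ (Kv dm M N d ω x y) ≤ 8 ^ (Kv dm M N d ω x z) :=
      pow_le_pow_right₀ (by norm_num) (by omega)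
    nlinarith
  · apply le_max_of_le_right
    have h8 : (8:ℝ) ^ (Kv dm M N d ω x y) ≤ 8 ^ (Kv dm M N d ω z y) :=
      pow_le_pow_right₀ (by norm_num) (by omega)
    nlinarith

include hd hdm hn hbig in
lemma ρc_dom (ω : Equiv.Perm X × Fin N) (x y : X) : d x y ≤ ρc dm M N d ω x y := by
  by_cases hxy : x = y
  · subst hxy
    rw [hd.self]
    exact ρc_nonneg hdm ω x x
  · set K := Kv dm M N d ω x y with hK
    have hsame := not_sep_at_Kv hd hdm hbig ω x y
    unfold ckk at hsame
    have hdiam := ck_diam hd (skc_nonneg hdm K) (rrc_nonneg hdm K ω.2) ω.1 hsame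
    have hrub := rrc_ub (dm := dm) (N := N) hdm K ω.2
    have hnsk := nsk_le (X := X) hdm hn K
    unfold ρc
    rw [if_neg hxy]
    have hΔ : (9:ℝ)/8 * dm * 8 ^ K = 9/8 * Δc dm K := by
      unfold Δc; ring
    rw [← hK, hΔ]
    linarith

lemma sup_succ_eq {S : Finset ℕ} (hS : S.Nonempty) : S.sup (· + 1) = S.max' hS + 1 := by
  apply le_antisymm
  · apply Finset.sup_le
    intro k hk
    have := Finset.le_max' S k hk
    omega
  · exact Finset.le_sup (f := (· + 1)) (S.max'_mem hS)

include hd hdm hn in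
lemma ρc_32n (hdmin : ∀ z w : X, z ≠ w → dm ≤ d z w) (ω : Equiv.Perm X × Fin N) {x y : X}
    (hxy : x ≠ y) : ρc dm M N d ω x y ≤ 32 * (Fintype.card X : ℝ) * d x y := by
  have hdxy : 0 < d x y := hd.pos hxy
  have hcard := card_pos_real (X := X) hn
  unfold ρc
  rw [if_neg hxy]
  rcases Finset.eq_empty_or_nonempty (sepSet dm M N d ω x y) with he | hne
  · unfold Kv
    rw [he]
    simp only [Finset.sup_empty]
    have h1 : dm ≤ d x y := hdmin x y hxy
    have h2 : (9:ℝ)/8 * dm * 8^(⊥ : ℕ) = 9/8 * dm := by norm_num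
    rw [h2]
    have hc2 : (2:ℝ) ≤ (Fintype.card X : ℝ) := by exact_mod_cast hn
    nlinarith
  · set K := (sepSet dm M N d ω x y).max' hne with hKdef
    have hKv : Kv dm M N d ω x y = K + 1 := sup_succ_eq hne
    have hKmem : K ∈ sepSet dm M N d ω x y := Finset.max'_mem _ hne
    have hsep : ckk dm N d ω K x ≠ ckk dm N d ω K y := by
      unfold sepSet at hKmem
      exact (Finset.mem_filter.1 hKmem).2
    have hfar : skc (X := X) dm K < d x y := by
      unfold ckk at hsep
      exact ck_sep_far hd (rrc_nonneg hdm K ω.2) ω.1 hsep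
    rw [hKv]
    have hsk : skc (X := X) dm K = 9/32 * Δc dm K / Fintype.card X := rfl
    have hΔ : (9:ℝ)/8 * dm * 8^(K+1) = 9 * Δc dm K := by
      unfold Δc; ring
    rw [hΔ]
    have h3 : 9 * Δc dm K = 32 * (Fintype.card X : ℝ) * skc (X := X) dm K := by
      rw [hsk]
      field_simp
    rw [h3]
    nlinarith

include hd hdm hn in
lemma ρc_metric (hbig2 : ∀ z w : X, d z w ≤ Δc dm M * (1/4)) (ω : Equiv.Perm X × Fin N) :
    IsMetric (ρc dm M N d ω) := by
  refine ⟨fun x y => ρc_nonneg hdm ω x y, ?_, fun x y => ρc_symm ω x y, ?_⟩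
  · intro x y
    constructor
    · intro h
      by_contra hxy
      have := ρc_pos (d := d) (M := M) (N := N) hdm ω hxy
      linarith
    · intro h
      subst h
      unfold ρc
      rw [if_pos rfl]
  · intro x y z
    have hu := ρc_ultra (d := d) (M := M) (N := N) hdm ω x z y
    have h1 := ρc_nonneg (d := d) (M := M) (N := N) hdm ω x y
    have h2 := ρc_nonneg (d := d) (M := M) (N := N) hdm ω y z
    rcases max_cases (ρc dm M N d ω x y) (ρc dm M N d ω y z) with ⟨hm, _⟩ | ⟨hm, _⟩
    · rw [hm] at hu; linarith
    · rw [hm] at hu; linarith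

include hd hdm hn hbig in
lemma ρc_event (hdmin : ∀ z w : X, z ≠ w → dm ≤ d z w)
    (ω : Equiv.Perm X × Fin N) {x y : X} (hxy : x ≠ y) {u : ℝ} (hu : 2 ≤ u)
    (hud : u * d x y ≤ ρc dm M N d ω x y) :
    ∃ K, K < M ∧ ckk dm N d ω K x ≠ ckk dm N d ω K y ∧ d x y ≤ 9 * Δc dm K / u := by
  have hdxy : 0 < d x y := hd.pos hxy
  unfold ρc at hud
  rw [if_neg hxy] at hud
  rcases Finset.eq_empty_or_nonempty (sepSet dm M N d ω x y) with he | hne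
  · exfalso
    unfold Kv at hud
    rw [he] at hud
    simp only [Finset.sup_empty] at hud
    have h2 : (9:ℝ)/8 * dm * 8^(⊥ : ℕ) = 9/8 * dm := by norm_num
    rw [h2] at hud
    have h3 : dm ≤ d x y := hdmin x y hxy
    nlinarith [hd.pos hxy]
  · set K := (sepSet dm M N d ω x y).max' hne with hKdef
    have hKv : Kv dm M N d ω x y = K + 1 := sup_succ_eq hne
    have hKmem : K ∈ sepSet dm M N d ω x y := Finset.max'_mem _ hne
    unfold sepSet at hKmem
    rw [Finset.mem_filter, Finset.mem_range] at hKmem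
    have hKM : K ≠ M := by
      intro h
      exact hKmem.2 (h ▸ sep_top hd hdm hbig ω x y)
    refine ⟨K, by omega, hKmem.2, ?_⟩
    rw [hKv] at hud
    have hΔ : (9:ℝ)/8 * dm * 8^(K+1) = 9 * Δc dm K := by
      unfold Δc; ring
    rw [hΔ] at hud
    rw [le_div_iff₀ (by linarith)]
    nlinarith

end RhoFacts

/-! ### the per-scale counting bound -/

section TailCount

variable {d : X → X → ℝ} {dm : ℝ} {M N : ℕ}

set_option maxHeartbeats 2000000 in
lemma scale_count (hd : IsMetric d) (hdm : 0 < dm) (hn : 2 ≤ Fintype.card X) (hN : 0 < N)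
    (x : X) (u : ℝ) (hu : 400 ≤ u) (k : ℕ) :
    ((Finset.univ.filter (fun ω : Equiv.Perm X × Fin N =>
        ∃ y : X, d x y ≤ 9 * Δc dm k / u ∧ ckk dm N d ω k x ≠ ckk dm N d ω k y)).card : ℝ) ≤
      (Fintype.card (Equiv.Perm X) : ℝ) * (576 * N / u + 1) *
        (Real.log ((Finset.univ.filter (fun v : X =>
            qd d (skc (X := X) dm (k+1)) x v ≤
              Δc dm (k+1) * (1/4) - 9 * Δc dm (k+1) / u)).card) -
         Real.log ((Finset.univ.filter (fun v : X =>
            qd d (skc (X := X) dm k) x v ≤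
              Δc dm k * (1/4) - 9 * Δc dm k / u)).card)) := by
  classical
  have hu0 : (0:ℝ) < u := by linarith
  set Δ := Δc dm k with hΔdef
  have hΔ : 0 < Δ := Δc_pos hdm k
  set t := 9 * Δ / u with htdef
  have ht0 : 0 ≤ t := by positivity
  have htΔ : t ≤ Δ / 32 := by
    rw [htdef, div_le_div_iff₀ hu0 (by norm_num)]
    nlinarith
  set sk := skc (X := X) dm k with hskdef
  have hsk0 : 0 ≤ sk := skc_nonneg hdm k
  set q : X → ℝ := fun w => qd d sk x w with hqdef
  set AA := Finset.univ.filter (fun v : X => q v ≤ Δ * (1/4) - t) with hAAdef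
  set WW := Finset.univ.filter
    (fun w : X => Δ * (1/4) - t < q w ∧ q w ≤ 9/32 * Δ + t) with hWWdef
  set Tset : X → Finset X := fun w => Finset.univ.filter (fun v : X => q v ≤ q w) with hTdef
  have hwT : ∀ w : X, w ∈ Tset w := by
    intro w; simp [hTdef]
  set Fib : X → Finset (Equiv.Perm X) := fun w =>
    Finset.univ.filter (fun π => pmin π (Tset w) ⟨w, hwT w⟩ = w) with hFibdef
  set Jset : X → Finset (Fin N) := fun w =>
    Finset.univ.filter (fun j : Fin N =>
      q w - t ≤ Δ * (1/4) + (j.val : ℝ) * (Δ / (32 * (N:ℝ))) ∧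
      Δ * (1/4) + (j.val : ℝ) * (Δ / (32 * (N:ℝ))) ≤ q w + t) with hJdef
  -- step 1: event inclusion
  have hincl : (Finset.univ.filter (fun ω : Equiv.Perm X × Fin N =>
      ∃ y : X, d x y ≤ 9 * Δc dm k / u ∧ ckk dm N d ω k x ≠ ckk dm N d ω k y)) ⊆
      WW.biUnion (fun w => (Fib w) ×ˢ (Jset w)) := by
    intro ω hω
    rw [Finset.mem_filter] at hω
    obtain ⟨-, y, hdxy, hsep⟩ := hω
    have hrlb := rrc_lb (dm := dm) (N := N) hdm k ω.2
    have hrub := rrc_ub (dm := dm) (N := N) hdm k ω.2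
    have hr0 : 0 ≤ rrc dm N k ω.2 := rrc_nonneg hdm k ω.2
    unfold ckk at hsep
    obtain ⟨w0, h1, h2, h3⟩ := ck_padding hd hsk0 hr0 ht0 ω.1 (le_of_eq_of_le rfl hdxy) hsep
    rw [Finset.mem_biUnion]
    refine ⟨w0, ?_, ?_⟩
    · rw [hWWdef, Finset.mem_filter]
      refine ⟨Finset.mem_univ _, ?_, ?_⟩
      · calc Δ * (1/4) - t ≤ rrc dm N k ω.2 - t := by linarith
          _ < q w0 := h1
      · calc q w0 ≤ rrc dm N k ω.2 + t := h2
          _ ≤ 9/32 * Δ + t := by linarith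
    · rw [Finset.mem_product]
      constructor
      · rw [hFibdef]
        simp only [Finset.mem_filter, Finset.mem_univ, true_and]
        exact h3
      · rw [hJdef]
        simp only [Finset.mem_filter, Finset.mem_univ, true_and]
        have hrr : rrc dm N k ω.2 = Δ * (1/4) + (ω.2.val : ℝ) * (Δ / (32 * (N:ℝ))) := rfl
        rw [← hrr]
        constructor
        · linarith
        · linarith
  -- step 2/3: cardinality bound
  have hcard1 : ((Finset.univ.filter (fun ω : Equiv.Perm X × Fin N =>
      ∃ y : X, d x y ≤ 9 * Δc dm k / u ∧ ckk dm N d ω k x ≠ ckk dm N d ω k y)).card : ℝ) ≤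
      ∑ w ∈ WW, ((Fib w).card : ℝ) * ((Jset w).card : ℝ) := by
    have h1 := Finset.card_le_card hincl
    have h2 := Finset.card_biUnion_le (s := WW) (t := fun w => (Fib w) ×ˢ (Jset w))
    have h3 : ∀ w ∈ WW, ((Fib w) ×ˢ (Jset w)).card = (Fib w).card * (Jset w).card :=
      fun w _ => Finset.card_product _ _
    calc ((Finset.univ.filter _).card : ℝ) ≤ ((WW.biUnion (fun w => (Fib w) ×ˢ (Jset w))).card : ℝ) := by
          exact_mod_cast h1
      _ ≤ ((∑ w ∈ WW, ((Fib w) ×ˢ (Jset w)).card : ℕ) : ℝ) := by exact_mod_cast h2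
      _ = ∑ w ∈ WW, ((Fib w).card : ℝ) * ((Jset w).card : ℝ) := by
          push_cast
          apply Finset.sum_congr rfl
          intro w hw
          rw [h3 w hw]
          push_cast
          ring
  -- per-w bounds
  have hFib : ∀ w : X, ((Fib w).card : ℝ) = (Fintype.card (Equiv.Perm X) : ℝ) *
      (((Tset w).card : ℝ))⁻¹ := by
    intro w
    have hc := pmin_count (Tset w) ⟨w, hwT w⟩ (hwT w)
    have hTpos : 0 < ((Tset w).card : ℝ) := by
      have h0 : 0 < (Tset w).card := Finset.card_pos.2 ⟨w, hwT w⟩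
      exact_mod_cast h0
    have hcc : ((Fib w).card : ℝ) * ((Tset w).card : ℝ) =
        (Fintype.card (Equiv.Perm X) : ℝ) := by
      rw [hFibdef]
      rw [← Finset.card_univ]
      exact_mod_cast hc
    field_simp at hcc ⊢
    linarith [hcc]
  have hJ : ∀ w : X, ((Jset w).card : ℝ) ≤ 576 * N / u + 1 := by
    intro w
    have hgc := grid_count (N := N) (Δ * (1/4)) (Δ / (32 * (N:ℝ))) t (q w)
      (by positivity) ht0
    have hNr : (0:ℝ) < (N:ℝ) := by exact_mod_cast hN
    have heq : 2 * t / (Δ / (32 * (N:ℝ))) = 576 * (N:ℝ) / u := by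
      rw [htdef]
      field_simp
      ring
    rw [heq] at hgc
    rw [hJdef]
    exact hgc
  -- harmonic
  have hAAx : x ∈ AA := by
    rw [hAAdef]
    simp only [Finset.mem_filter, Finset.mem_univ, true_and]
    rw [hqdef]
    simp only
    rw [qd_self hd]
    linarith
  have hAAne : AA.Nonempty := ⟨x, hAAx⟩
  have hdisj : Disjoint AA WW := by
    rw [Finset.disjoint_left]
    intro v hv hv'
    rw [hAAdef, Finset.mem_filter] at hv
    rw [hWWdef, Finset.mem_filter] at hv'
    linarith [hv.2, hv'.2.1]
  have hharm := harmonic_sum_bound AA hAAne q Tset WW hdisj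
    (by
      intro w hw v hv
      rw [hAAdef, Finset.mem_filter] at hv
      rw [hWWdef, Finset.mem_filter] at hw
      rw [hTdef]
      simp only [Finset.mem_filter, Finset.mem_univ, true_and]
      linarith [hv.2, hw.2.1])
    (by
      intro w hw v hv hle
      rw [hTdef]
      simp only [Finset.mem_filter, Finset.mem_univ, true_and]
      exact hle)
  -- monotonicity into next scale
  have hmono : AA.card + WW.card ≤
      (Finset.univ.filter (fun v : X =>
        qd d (skc (X := X) dm (k+1)) x v ≤
          Δc dm (k+1) * (1/4) - 9 * Δc dm (k+1) / u)).card := by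
    rw [← Finset.card_union_of_disjoint hdisj]
    apply Finset.card_le_card
    intro v hv
    have hqv : q v ≤ 9/32 * Δ + t := by
      rw [Finset.mem_union] at hv
      rcases hv with hv | hv
      · rw [hAAdef, Finset.mem_filter] at hv
        have := hv.2
        linarith
      · rw [hWWdef, Finset.mem_filter] at hv
        exact hv.2.2
    have hdv : d x v ≤ 19/32 * Δ := by
      have h1 := d_le_qd hd hsk0 x v
      have h2 := nsk_le (X := X) hdm hn k
      rw [hqdef] at hqv
      simp only at hqv
      rw [← hskdef, ← hΔdef] at h2
      linarith
    simp only [Finset.mem_filter, Finset.mem_univ, true_and]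
    have h3 : qd d (skc (X := X) dm (k+1)) x v ≤ d x v :=
      qd_le_d hd x v
    have hΔ' : Δc dm (k+1) = 8 * Δ := by
      rw [hΔdef]
      unfold Δc
      rw [pow_succ]
      ring
    rw [hΔ']
    have ht' : 9 * (8 * Δ) / u ≤ 8 * Δ / 32 := by
      rw [div_le_div_iff₀ hu0 (by norm_num)]
      nlinarith
    linarith
  -- combine
  have hposA : 0 < (AA.card : ℝ) := by
    have : 0 < AA.card := Finset.card_pos.2 hAAne
    exact_mod_cast this
  have hlog1 : Real.log ((AA.card : ℝ) + WW.card) ≤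
      Real.log ((Finset.univ.filter (fun v : X =>
        qd d (skc (X := X) dm (k+1)) x v ≤
          Δc dm (k+1) * (1/4) - 9 * Δc dm (k+1) / u)).card) := by
    have hW0 : (0:ℝ) ≤ (WW.card : ℝ) := Nat.cast_nonneg _
    have hmono' : ((AA.card : ℝ) + WW.card) ≤
        ((Finset.univ.filter (fun v : X =>
          qd d (skc (X := X) dm (k+1)) x v ≤
            Δc dm (k+1) * (1/4) - 9 * Δc dm (k+1) / u)).card : ℝ) := by
      exact_mod_cast hmono
    exact Real.log_le_log (by linarith) hmono'
  have hsum2 : ∑ w ∈ WW, ((Fib w).card : ℝ) * ((Jset w).card : ℝ) ≤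
      (Fintype.card (Equiv.Perm X) : ℝ) * (576 * N / u + 1) *
        (∑ w ∈ WW, (((Tset w).card : ℝ))⁻¹) := by
    rw [Finset.mul_sum]
    apply Finset.sum_le_sum
    intro w hw
    rw [hFib w]
    have hTpos : (0:ℝ) < ((Tset w).card : ℝ) := by
      have : 0 < (Tset w).card := Finset.card_pos.2 ⟨w, hwT w⟩
      exact_mod_cast this
    have hinv : (0:ℝ) ≤ (((Tset w).card : ℝ))⁻¹ := inv_nonneg.2 (le_of_lt hTpos)
    have hperm : (0:ℝ) ≤ (Fintype.card (Equiv.Perm X) : ℝ) := Nat.cast_nonneg _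
    calc (Fintype.card (Equiv.Perm X) : ℝ) * (((Tset w).card : ℝ))⁻¹ * ((Jset w).card : ℝ)
        ≤ (Fintype.card (Equiv.Perm X) : ℝ) * (((Tset w).card : ℝ))⁻¹ * (576 * N / u + 1) := by
          apply mul_le_mul_of_nonneg_left (hJ w) (mul_nonneg hperm hinv)
      _ = (Fintype.card (Equiv.Perm X) : ℝ) * (576 * N / u + 1) * (((Tset w).card : ℝ))⁻¹ := by
          ring
  have hlogmono : (∑ w ∈ WW, (((Tset w).card : ℝ))⁻¹) ≤
      Real.log ((Finset.univ.filter (fun v : X =>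
        qd d (skc (X := X) dm (k+1)) x v ≤
          Δc dm (k+1) * (1/4) - 9 * Δc dm (k+1) / u)).card) -
      Real.log (AA.card : ℝ) := by
    calc (∑ w ∈ WW, (((Tset w).card : ℝ))⁻¹)
        ≤ Real.log ((AA.card : ℝ) + WW.card) - Real.log (AA.card : ℝ) := hharm
      _ ≤ _ := by linarith [hlog1]
  have hC : (0:ℝ) ≤ (Fintype.card (Equiv.Perm X) : ℝ) * (576 * N / u + 1) := by
    have h1 : (0:ℝ) ≤ (Fintype.card (Equiv.Perm X) : ℝ) := Nat.cast_nonneg _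
    have h2 : (0:ℝ) ≤ 576 * (N:ℝ) / u := by positivity
    nlinarith
  calc ((Finset.univ.filter (fun ω : Equiv.Perm X × Fin N =>
      ∃ y : X, d x y ≤ 9 * Δc dm k / u ∧ ckk dm N d ω k x ≠ ckk dm N d ω k y)).card : ℝ)
      ≤ ∑ w ∈ WW, ((Fib w).card : ℝ) * ((Jset w).card : ℝ) := hcard1
    _ ≤ (Fintype.card (Equiv.Perm X) : ℝ) * (576 * N / u + 1) *
        (∑ w ∈ WW, (((Tset w).card : ℝ))⁻¹) := hsum2
    _ ≤ _ := by
        apply mul_le_mul_of_nonneg_left _ hC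
        rw [hAAdef] at hlogmono
        exact hlogmono

end TailCount

/-! ### the master tail bound -/

section Master

variable {d : X → X → ℝ} {dm : ℝ} {M N : ℕ}

set_option maxHeartbeats 2000000 in
lemma tail_count (hd : IsMetric d) (hdm : 0 < dm) (hn : 2 ≤ Fintype.card X) (hN : 0 < N)
    (hbig : ∀ z w : X, d z w ≤ Δc dm M * (1/4))
    (hdmin : ∀ z w : X, z ≠ w → dm ≤ d z w)
    (x : X) (u : ℝ) (hu : 400 ≤ u) :
    ((Finset.univ.filter (fun ω : Equiv.Perm X × Fin N =>
        u ≤ ⨆ y : {y : X // y ≠ x}, ρc dm M N d ω x y.1 / d x y.1)).card : ℝ) ≤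
      (Fintype.card (Equiv.Perm X) : ℝ) * (576 * N / u + 1) *
        Real.log (Fintype.card X) := by
  classical
  have hu0 : (0:ℝ) < u := by linarith
  haveI hne : Nonempty {y : X // y ≠ x} := by
    obtain ⟨y, hy⟩ := Fintype.exists_ne_of_one_lt_card (by omega) x
    exact ⟨⟨y, hy⟩⟩
  -- event inclusion into the union of scale events
  have hincl : (Finset.univ.filter (fun ω : Equiv.Perm X × Fin N =>
      u ≤ ⨆ y : {y : X // y ≠ x}, ρc dm M N d ω x y.1 / d x y.1)) ⊆
      (Finset.range M).biUnion (fun k => Finset.univ.filter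
        (fun ω : Equiv.Perm X × Fin N =>
          ∃ y : X, d x y ≤ 9 * Δc dm k / u ∧ ckk dm N d ω k x ≠ ckk dm N d ω k y)) := by
    intro ω hω
    rw [Finset.mem_filter] at hω
    obtain ⟨-, hsup⟩ := hω
    obtain ⟨y0, hy0⟩ := Finite.exists_max (fun y : {y : X // y ≠ x} =>
      ρc dm M N d ω x y.1 / d x y.1)
    have hsup_le : (⨆ y : {y : X // y ≠ x}, ρc dm M N d ω x y.1 / d x y.1) ≤
        ρc dm M N d ω x y0.1 / d x y0.1 := ciSup_le hy0
    have huratio : u ≤ ρc dm M N d ω x y0.1 / d x y0.1 := le_trans hsup hsup_le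
    have hxy : x ≠ y0.1 := Ne.symm y0.2
    have hd0 : 0 < d x y0.1 := hd.pos hxy
    have hud : u * d x y0.1 ≤ ρc dm M N d ω x y0.1 := by
      rw [le_div_iff₀ hd0] at huratio
      exact huratio
    obtain ⟨K, hKM, hsep, hdist⟩ := ρc_event hd hdm hn hbig hdmin ω hxy (by linarith) hud
    rw [Finset.mem_biUnion]
    refine ⟨K, Finset.mem_range.2 hKM, ?_⟩
    rw [Finset.mem_filter]
    exact ⟨Finset.mem_univ _, y0.1, hdist, hsep⟩
  -- sum over scales
  have hsum : ((Finset.univ.filter (fun ω : Equiv.Perm X × Fin N =>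
      u ≤ ⨆ y : {y : X // y ≠ x}, ρc dm M N d ω x y.1 / d x y.1)).card : ℝ) ≤
      ∑ k ∈ Finset.range M, ((Finset.univ.filter
        (fun ω : Equiv.Perm X × Fin N =>
          ∃ y : X, d x y ≤ 9 * Δc dm k / u ∧
            ckk dm N d ω k x ≠ ckk dm N d ω k y)).card : ℝ) := by
    have h1 := Finset.card_le_card hincl
    have h2 := Finset.card_biUnion_le (s := Finset.range M)
      (t := fun k => Finset.univ.filter (fun ω : Equiv.Perm X × Fin N =>
        ∃ y : X, d x y ≤ 9 * Δc dm k / u ∧ ckk dm N d ω k x ≠ ckk dm N d ω k y))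
    have h3 : ((Finset.univ.filter (fun ω : Equiv.Perm X × Fin N =>
        u ≤ ⨆ y : {y : X // y ≠ x}, ρc dm M N d ω x y.1 / d x y.1)).card : ℕ) ≤
        ∑ k ∈ Finset.range M, ((Finset.univ.filter
          (fun ω : Equiv.Perm X × Fin N =>
            ∃ y : X, d x y ≤ 9 * Δc dm k / u ∧
              ckk dm N d ω k x ≠ ckk dm N d ω k y)).card : ℕ) := le_trans h1 h2
    exact_mod_cast h3
  -- telescoping
  set f : ℕ → ℝ := fun k => Real.log ((Finset.univ.filter (fun v : X =>
      qd d (skc (X := X) dm k) x v ≤ Δc dm k * (1/4) - 9 * Δc dm k / u)).card) with hfdef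
  have hscale : ∀ k ∈ Finset.range M, ((Finset.univ.filter
      (fun ω : Equiv.Perm X × Fin N =>
        ∃ y : X, d x y ≤ 9 * Δc dm k / u ∧
          ckk dm N d ω k x ≠ ckk dm N d ω k y)).card : ℝ) ≤
      (Fintype.card (Equiv.Perm X) : ℝ) * (576 * N / u + 1) * (f (k+1) - f k) := by
    intro k _
    exact scale_count hd hdm hn hN x u hu k
  have htel : ∑ k ∈ Finset.range M,
      ((Fintype.card (Equiv.Perm X) : ℝ) * (576 * N / u + 1) * (f (k+1) - f k)) =
      (Fintype.card (Equiv.Perm X) : ℝ) * (576 * N / u + 1) * (f M - f 0) := by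
    rw [← Finset.mul_sum]
    rw [Finset.sum_range_sub f M]
  -- f M ≤ log card, f 0 ≥ 0
  have hxmem : ∀ k : ℕ, x ∈ (Finset.univ.filter (fun v : X =>
      qd d (skc (X := X) dm k) x v ≤ Δc dm k * (1/4) - 9 * Δc dm k / u)) := by
    intro k
    simp only [Finset.mem_filter, Finset.mem_univ, true_and]
    rw [qd_self hd]
    have hΔ := Δc_pos (dm := dm) hdm k
    have ht : 9 * Δc dm k / u ≤ Δc dm k / 32 := by
      rw [div_le_div_iff₀ hu0 (by norm_num)]
      nlinarith
    linarith
  have hf0 : 0 ≤ f 0 := by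
    rw [hfdef]
    apply Real.log_nonneg
    have h1 : 1 ≤ (Finset.univ.filter (fun v : X =>
        qd d (skc (X := X) dm 0) x v ≤ Δc dm 0 * (1/4) - 9 * Δc dm 0 / u)).card :=
      Finset.card_pos.2 ⟨x, hxmem 0⟩
    exact_mod_cast h1
  have hfM : f M ≤ Real.log (Fintype.card X) := by
    rw [hfdef]
    apply Real.log_le_log
    · have h1 : 1 ≤ (Finset.univ.filter (fun v : X =>
          qd d (skc (X := X) dm M) x v ≤ Δc dm M * (1/4) - 9 * Δc dm M / u)).card :=
        Finset.card_pos.2 ⟨x, hxmem M⟩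
      have : (0:ℕ) < _ := h1
      exact_mod_cast this
    · have h2 : (Finset.univ.filter (fun v : X =>
          qd d (skc (X := X) dm M) x v ≤ Δc dm M * (1/4) - 9 * Δc dm M / u)).card ≤
          Fintype.card X := by
        rw [← Finset.card_univ]
        exact Finset.card_le_univ _
      exact_mod_cast h2
  have hC : (0:ℝ) ≤ (Fintype.card (Equiv.Perm X) : ℝ) * (576 * N / u + 1) := by
    have h1 : (0:ℝ) ≤ (Fintype.card (Equiv.Perm X) : ℝ) := Nat.cast_nonneg _
    have h2 : (0:ℝ) ≤ 576 * (N:ℝ) / u := by positivity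
    nlinarith
  calc ((Finset.univ.filter (fun ω : Equiv.Perm X × Fin N =>
      u ≤ ⨆ y : {y : X // y ≠ x}, ρc dm M N d ω x y.1 / d x y.1)).card : ℝ)
      ≤ ∑ k ∈ Finset.range M, ((Finset.univ.filter
        (fun ω : Equiv.Perm X × Fin N =>
          ∃ y : X, d x y ≤ 9 * Δc dm k / u ∧
            ckk dm N d ω k x ≠ ckk dm N d ω k y)).card : ℝ) := hsum
    _ ≤ ∑ k ∈ Finset.range M,
        ((Fintype.card (Equiv.Perm X) : ℝ) * (576 * N / u + 1) * (f (k+1) - f k)) :=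
        Finset.sum_le_sum hscale
    _ = (Fintype.card (Equiv.Perm X) : ℝ) * (576 * N / u + 1) * (f M - f 0) := htel
    _ ≤ (Fintype.card (Equiv.Perm X) : ℝ) * (576 * N / u + 1) *
        Real.log (Fintype.card X) := by
        apply mul_le_mul_of_nonneg_left _ hC
        linarith

end Master
end MGTB

set_option maxHeartbeats 2000000 in
/-- Tail-bound version: there is a universal `C > 0` so that every `n`-point metric space
(`n ≥ 2`) admits a finitely supported distribution over dominating ultrametrics `ρ` with
`ρ ≤ 32 n d` off the diagonal, such that for every `x` and `u > 0` the probability that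
the maximum gradient at `x` is at least `u` is at most `C (log n)/u`. -/
theorem maximum_gradient_tail_bound :
    ∃ C : ℝ, 0 < C ∧
      ∀ (X : Type) [Fintype X] (d : X → X → ℝ) (n : ℕ),
        Fintype.card X = n → 2 ≤ n → IsMetric d →
        ∃ (m : ℕ) (w : Fin m → ℝ) (ρ : Fin m → X → X → ℝ),
          (∀ i, 0 ≤ w i) ∧ (∑ i, w i = 1) ∧
          (∀ i, w i ≠ 0 →
            IsMetric (ρ i) ∧ IsUltrametric (ρ i) ∧ (∀ x y, d x y ≤ ρ i x y) ∧
            (∀ x y, x ≠ y → ρ i x y ≤ 32 * n * d x y)) ∧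
          (∀ x : X, ∀ u : ℝ, 0 < u →
            ∑ i ∈ Finset.univ.filter
                (fun i => u ≤ ⨆ y : {y : X // y ≠ x}, ρ i x y.1 / d x y.1), w i ≤
              C * Real.log n / u) := by
  classical
  refine ⟨600, by norm_num, ?_⟩
  intro X _ d n hcard hn2 hd
  subst hcard
  have hn2' : 2 ≤ Fintype.card X := hn2
  have hX : Nonempty X := by
    have h0 : 0 < Fintype.card X := by omega
    exact Fintype.card_pos_iff.1 h0
  obtain ⟨x0⟩ := hX
  obtain ⟨y0, hy0⟩ := Fintype.exists_ne_of_one_lt_card (by omega) x0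
  have hoff : (Finset.univ.offDiag : Finset (X × X)).Nonempty :=
    ⟨(y0, x0), Finset.mem_offDiag.2 ⟨Finset.mem_univ _, Finset.mem_univ _, hy0⟩⟩
  set dm := Finset.univ.offDiag.inf' hoff (fun p : X × X => d p.1 p.2) with hdmdef
  have hdmin : ∀ z w : X, z ≠ w → dm ≤ d z w := by
    intro z w hzw
    have h := Finset.inf'_le (fun p : X × X => d p.1 p.2)
      (show ((z, w) : X × X) ∈ Finset.univ.offDiag from
        Finset.mem_offDiag.2 ⟨Finset.mem_univ z, Finset.mem_univ w, hzw⟩)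
    exact h
  have hdm : 0 < dm := by
    obtain ⟨p, hp, hpe⟩ := Finset.exists_mem_eq_inf' hoff (fun p : X × X => d p.1 p.2)
    rw [hdmdef, hpe]
    exact hd.pos (Finset.mem_offDiag.1 hp).2.2
  have hXne : (Finset.univ : Finset (X × X)).Nonempty := ⟨(x0, x0), Finset.mem_univ _⟩
  set Dm := Finset.univ.sup' hXne (fun p : X × X => d p.1 p.2) with hDmdef
  have hDm : ∀ z w : X, d z w ≤ Dm := by
    intro z w
    have h := Finset.le_sup' (fun p : X × X => d p.1 p.2) (Finset.mem_univ ((z, w) : X × X))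
    exact h
  obtain ⟨M, hM⟩ := exists_nat_ge (4 * Dm / dm)
  have h8M : (4 * Dm / dm) ≤ (8:ℝ)^M := by
    refine le_trans hM ?_
    have h1 : M < 8 ^ M := Nat.lt_pow_self (by norm_num)
    have h2 : (M:ℝ) ≤ ((8^M : ℕ) : ℝ) := by exact_mod_cast le_of_lt h1
    have h3 : ((8^M : ℕ) : ℝ) = (8:ℝ)^M := by push_cast; ring
    linarith [h3 ▸ h2]
  have hbig : ∀ z w : X, d z w ≤ MGTB.Δc dm M * (1/4) := by
    intro z w
    have h4 : 4 * Dm ≤ dm * 8^M := by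
      rw [div_le_iff₀ hdm] at h8M
      linarith
    have h5 := hDm z w
    unfold MGTB.Δc
    linarith
  set N := 64 * Fintype.card X with hNdef
  have hN : 0 < N := by
    have : 0 < Fintype.card X := by omega
    omega
  haveI hΩne : Nonempty (Equiv.Perm X × Fin N) := ⟨(1, ⟨0, hN⟩)⟩
  set m := Fintype.card (Equiv.Perm X × Fin N) with hmdef
  have hm : 0 < m := Fintype.card_pos_iff.2 hΩne
  have hmR : (0:ℝ) < (m:ℝ) := by exact_mod_cast hm
  set e : Fin m ≃ (Equiv.Perm X × Fin N) := (Fintype.equivFin (Equiv.Perm X × Fin N)).symm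
    with hedef
  refine ⟨m, fun _ => (m:ℝ)⁻¹, fun i => MGTB.ρc dm M N d (e i), ?_, ?_, ?_, ?_⟩
  · intro i
    positivity
  · rw [Finset.sum_const, Finset.card_univ, Fintype.card_fin, nsmul_eq_mul]
    exact mul_inv_cancel₀ (ne_of_gt hmR)
  · intro i _
    refine ⟨MGTB.ρc_metric hd hdm hn2' hbig (e i),
      MGTB.ρc_ultra hdm (e i), MGTB.ρc_dom hd hdm hn2' hbig (e i), ?_⟩
    intro x y hxy
    exact MGTB.ρc_32n hd hdm hn2' hdmin (e i) hxy
  · intro x u hu0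
    have hlogpos : 0 < Real.log (Fintype.card X) := by
      apply Real.log_pos
      exact_mod_cast hn2'
    by_cases hcase : u ≤ 600 * Real.log (Fintype.card X)
    · -- trivial bound
      have h1 : ∑ i ∈ Finset.univ.filter
          (fun i => u ≤ ⨆ y : {y : X // y ≠ x},
            MGTB.ρc dm M N d (e i) x y.1 / d x y.1), (fun _ : Fin m => (m:ℝ)⁻¹) i ≤
          ∑ i : Fin m, (m:ℝ)⁻¹ := by
        apply Finset.sum_le_sum_of_subset_of_nonneg (Finset.filter_subset _ _)
        intro i _ _
        positivity
      have h2 : ∑ i : Fin m, (m:ℝ)⁻¹ = 1 := by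
        rw [Finset.sum_const, Finset.card_univ, Fintype.card_fin, nsmul_eq_mul]
        exact mul_inv_cancel₀ (ne_of_gt hmR)
      have h3 : (1:ℝ) ≤ 600 * Real.log (Fintype.card X) / u := (one_le_div hu0).2 hcase
      calc ∑ i ∈ Finset.univ.filter
            (fun i => u ≤ ⨆ y : {y : X // y ≠ x},
              MGTB.ρc dm M N d (e i) x y.1 / d x y.1), (m:ℝ)⁻¹
          ≤ 1 := by rw [← h2]; exact h1
        _ ≤ 600 * Real.log (Fintype.card X) / u := h3
    · push_neg at hcase
      have hu400 : 400 ≤ u := by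
        have hl2 : Real.log 2 ≤ Real.log (Fintype.card X) := by
          apply Real.log_le_log (by norm_num)
          exact_mod_cast hn2'
        have := Real.log_two_gt_d9
        nlinarith
      -- transfer the filter to Ω
      have hcardeq : (Finset.univ.filter
          (fun i : Fin m => u ≤ ⨆ y : {y : X // y ≠ x},
            MGTB.ρc dm M N d (e i) x y.1 / d x y.1)).card =
          (Finset.univ.filter (fun ω : Equiv.Perm X × Fin N =>
            u ≤ ⨆ y : {y : X // y ≠ x}, MGTB.ρc dm M N d ω x y.1 / d x y.1)).card := by
        apply Finset.card_equiv e
        intro i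
        simp only [Finset.mem_filter, Finset.mem_univ, true_and]
      have hsumval : ∑ i ∈ Finset.univ.filter
          (fun i : Fin m => u ≤ ⨆ y : {y : X // y ≠ x},
            MGTB.ρc dm M N d (e i) x y.1 / d x y.1), (m:ℝ)⁻¹ =
          ((Finset.univ.filter (fun ω : Equiv.Perm X × Fin N =>
            u ≤ ⨆ y : {y : X // y ≠ x},
              MGTB.ρc dm M N d ω x y.1 / d x y.1)).card : ℝ) * (m:ℝ)⁻¹ := by
        rw [Finset.sum_const, nsmul_eq_mul, hcardeq]
      rw [hsumval]
      -- if the event is empty we are done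
      rcases Finset.eq_empty_or_nonempty (Finset.univ.filter
          (fun ω : Equiv.Perm X × Fin N =>
            u ≤ ⨆ y : {y : X // y ≠ x}, MGTB.ρc dm M N d ω x y.1 / d x y.1)) with
        hemp | hone
      · rw [hemp]
        simp only [Finset.card_empty, Nat.cast_zero, zero_mul]
        positivity
      · -- the event forces u ≤ 32 n
        obtain ⟨ω, hω⟩ := hone
        rw [Finset.mem_filter] at hω
        haveI hne : Nonempty {y : X // y ≠ x} := by
          obtain ⟨y, hy⟩ := Fintype.exists_ne_of_one_lt_card (by omega) x
          exact ⟨⟨y, hy⟩⟩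
        have hu32 : u ≤ 32 * (Fintype.card X : ℝ) := by
          have hsup : (⨆ y : {y : X // y ≠ x},
              MGTB.ρc dm M N d ω x y.1 / d x y.1) ≤ 32 * (Fintype.card X : ℝ) := by
            apply ciSup_le
            intro y
            have hd0 : 0 < d x y.1 := hd.pos (Ne.symm y.2)
            rw [div_le_iff₀ hd0]
            exact MGTB.ρc_32n hd hdm hn2' hdmin ω (Ne.symm y.2)
          exact le_trans hω.2 hsup
        have htc := MGTB.tail_count hd hdm hn2' hN hbig hdmin x u hu400
        have hperm0 : (0:ℝ) < (Fintype.card (Equiv.Perm X) : ℝ) := by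
          have : 0 < Fintype.card (Equiv.Perm X) := Fintype.card_pos
          exact_mod_cast this
        have hN0 : (0:ℝ) < (N:ℝ) := by exact_mod_cast hN
        have hmval : (m:ℝ) = (Fintype.card (Equiv.Perm X) : ℝ) * (N:ℝ) := by
          rw [hmdef]
          rw [Fintype.card_prod, Fintype.card_fin]
          push_cast
          ring
        have hL : (0:ℝ) ≤ Real.log (Fintype.card X) := le_of_lt hlogpos
        have hu0' : (0:ℝ) < u := hu0
        calc ((Finset.univ.filter (fun ω : Equiv.Perm X × Fin N =>
            u ≤ ⨆ y : {y : X // y ≠ x},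
              MGTB.ρc dm M N d ω x y.1 / d x y.1)).card : ℝ) * (m:ℝ)⁻¹
            ≤ ((Fintype.card (Equiv.Perm X) : ℝ) * (576 * N / u + 1) *
                Real.log (Fintype.card X)) * (m:ℝ)⁻¹ := by
              apply mul_le_mul_of_nonneg_right htc (by positivity)
          _ = 576 * Real.log (Fintype.card X) / u +
              Real.log (Fintype.card X) / N := by
              rw [hmval]
              field_simp
          _ ≤ 576 * Real.log (Fintype.card X) / u +
              24 * Real.log (Fintype.card X) / u := by
              have hkey : Real.log (Fintype.card X) / N ≤
                  24 * Real.log (Fintype.card X) / u := by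
                rw [div_le_div_iff₀ hN0 hu0']
                have hNval : (N:ℝ) = 64 * (Fintype.card X : ℝ) := by
                  rw [hNdef]; push_cast; ring
                nlinarith
              linarith
          _ = 600 * Real.log (Fintype.card X) / u := by ring
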